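/- arXiv:math/0307084 — 3 statements merged into one kernel-verified Lean document; each statement's English description precedes it below -/
import Mathlib

section
/- Let f : ℝ × ℝ → ℝ be smooth, with f(·,t) Schwartz for each t and all space-time derivatives of f bounded by Schwartz bounds locally uniformly in t. Then the function t ↦ L(f(·,t)) is differentiable with d/dt L(f(·,t)) = 2 ∫_ℝ f_t(x,t) · ( −f_{xx}(x,t) + f(x,t) − f(x,t)² ) dx. In particular, if f is a classical solution of the KdV equation then L(f(·,t)) is constant in t, and every solution ψ of ψ'' − ψ + ψ² = 0 (with ψ, ψ', ψ'' ∈ L²) is a critical point of L. -/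
open MeasureTheory Real Set

noncomputable section

/-- The spatial Fourier transform, with the convention of the paper:
`f̂(ξ) = ∫ e^{-ixξ} f(x) dx`. -/
def fourierTr (f : ℝ → ℝ) (ξ : ℝ) : ℂ :=
  ∫ x : ℝ, Complex.exp (-(Complex.I) * ((x * ξ : ℝ) : ℂ)) * (f x : ℂ)

/-- The (inhomogeneous) `H^s` norm: `‖(1+|ξ|)^s f̂(ξ)‖_{L²_ξ}`. -/
def HsNorm (s : ℝ) (f : ℝ → ℝ) : ℝ :=
  (∫ ξ : ℝ, ((1 + |ξ|) ^ s * ‖fourierTr f ξ‖) ^ 2) ^ (1 / 2 : ℝ)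

/-- The `H¹` norm in physical space: `(∫ f² + (f')²)^{1/2}`. -/
def H1Norm (f : ℝ → ℝ) : ℝ :=
  (∫ x : ℝ, (f x) ^ 2 + (deriv f x) ^ 2) ^ (1 / 2 : ℝ)

/-- The ground-state soliton `ψ₀(x) = (3/2) sech²(x/2)`. -/
def psi0 (x : ℝ) : ℝ := (3 / 2) * (1 / Real.cosh (x / 2)) ^ 2

/-- `H^s` distance of `f` to the set `Σ` of translates of the ground state. -/
def distHs (s : ℝ) (f : ℝ → ℝ) : ℝ :=
  ⨅ x₀ : ℝ, HsNorm s (fun x => f x - psi0 (x - x₀))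

/-- `f : ℝ → ℝ` is a Schwartz-class function. -/
def IsSchwartz (f : ℝ → ℝ) : Prop :=
  ContDiff ℝ (⊤ : ℕ∞) f ∧
    ∀ k n : ℕ, ∃ C : ℝ, ∀ x : ℝ, |x| ^ k * |iteratedDeriv n f x| ≤ C

/-- A classical solution of the KdV equation `u_t + u_{xxx} + (u²)_x = 0`,
smooth and Schwartz in space for each time. -/
def IsKdVSolution (u : ℝ → ℝ → ℝ) : Prop :=
  ContDiff ℝ (⊤ : ℕ∞) (fun p : ℝ × ℝ => u p.1 p.2) ∧
  (∀ t : ℝ, IsSchwartz (fun x => u x t)) ∧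
  ∀ x t : ℝ, deriv (fun τ => u x τ) t + iteratedDeriv 3 (fun y => u y t) x +
      deriv (fun y => (u y t) ^ 2) x = 0

/-- The Lyapunov functional `L(f) = ∫ (f')² + f² - (2/3) f³`. -/
def Lfun (f : ℝ → ℝ) : ℝ :=
  ∫ x : ℝ, (deriv f x) ^ 2 + (f x) ^ 2 - (2 / 3) * (f x) ^ 3

/-- `m` is an admissible symbol for the smoothing operator `I = I_N` with parameters
`s`, `N`, and derivative constant `Cm`. -/
def IsSymbol (s N Cm : ℝ) (m : ℝ → ℝ) : Prop :=
  ContDiff ℝ (⊤ : ℕ∞) m ∧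
  (∀ ξ : ℝ, 0 < m ξ ∧ m ξ ≤ 1) ∧
  (∀ ξ : ℝ, m (-ξ) = m ξ) ∧
  (∀ ξ η : ℝ, |ξ| ≤ |η| → m η ≤ m ξ) ∧
  (∀ ξ : ℝ, |ξ| ≤ N → m ξ = 1) ∧
  (∀ ξ : ℝ, 10 * N ≤ |ξ| → m ξ = (|ξ| / N) ^ (s - 1)) ∧
  (∀ ξ : ℝ, N ≤ |ξ| → |deriv m ξ| ≤ Cm * m ξ / |ξ|)

/-- The inverse Fourier transform (matching the convention of `fourierTr`). -/
def invFourier (g : ℝ → ℂ) (x : ℝ) : ℂ :=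
  (1 / ((2 * Real.pi : ℝ) : ℂ)) * ∫ ξ : ℝ, Complex.exp (Complex.I * ((x * ξ : ℝ) : ℂ)) * g ξ

/-- The Fourier multiplier operator with symbol `m`, e.g. `I_N`. -/
def applyMult (m : ℝ → ℝ) (f : ℝ → ℝ) (x : ℝ) : ℝ :=
  (invFourier (fun ξ => (m ξ : ℂ) * fourierTr f ξ) x).re

/-- The space-time Fourier transform `ũ(ξ,τ) = ∫∫ e^{-i(xξ+tτ)} u(x,t) dx dt`. -/
def spacetimeFourier (u : ℝ → ℝ → ℝ) (ξ τ : ℝ) : ℂ :=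
  ∫ t : ℝ, ∫ x : ℝ, Complex.exp (-(Complex.I) * ((x * ξ + t * τ : ℝ) : ℂ)) * (u x t : ℂ)

/-- The `X^{s,b}` norm `‖⟨ξ⟩^s ⟨τ-ξ³⟩^b ũ(ξ,τ)‖_{L²_{ξ,τ}}`. -/
def XNorm (s b : ℝ) (u : ℝ → ℝ → ℝ) : ℝ :=
  (∫ ξ : ℝ, ∫ τ : ℝ,
      ((1 + |ξ|) ^ s * (1 + |τ - ξ ^ 3|) ^ b * ‖spacetimeFourier u ξ τ‖) ^ 2) ^
    (1 / 2 : ℝ)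

/-- The restricted norm `X^{s,b}_J`, the infimum of `X^{s,b}` norms over all extensions off
of the time interval `J`. -/
def XNormOn (s b : ℝ) (J : Set ℝ) (u : ℝ → ℝ → ℝ) : ℝ :=
  sInf {r : ℝ | ∃ v : ℝ → ℝ → ℝ, (∀ x : ℝ, ∀ t ∈ J, v x t = u x t) ∧ r = XNorm s b v}

/-- Symmetrization of a symbol of three variables. -/
def sym3 (M : ℝ → ℝ → ℝ → ℝ) (a b c : ℝ) : ℝ :=
  (M a b c + M a c b + M b a c + M b c a + M c a b + M c b a) / 6

/-- The trilinear form `Λ₃(M; f₁, f₂, f₃)` over the hyperplane `ξ₁+ξ₂+ξ₃=0`,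
with the symmetrized symbol. -/
def Lambda3 (M : ℝ → ℝ → ℝ → ℝ) (f₁ f₂ f₃ : ℝ → ℝ) : ℂ :=
  ∫ ξ₁ : ℝ, ∫ ξ₂ : ℝ,
    ((sym3 M ξ₁ ξ₂ (-ξ₁ - ξ₂) : ℝ) : ℂ) * fourierTr f₁ ξ₁ * fourierTr f₂ ξ₂ *
      fourierTr f₃ (-ξ₁ - ξ₂)

/-- Symmetrization of a symbol of four variables. -/
def sym4 (M : ℝ → ℝ → ℝ → ℝ → ℝ) (a b c d : ℝ) : ℝ :=
  (M a b c d + M a b d c + M a c b d + M a c d b + M a d b c + M a d c b +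
   M b a c d + M b a d c + M b c a d + M b c d a + M b d a c + M b d c a +
   M c a b d + M c a d b + M c b a d + M c b d a + M c d a b + M c d b a +
   M d a b c + M d a c b + M d b a c + M d b c a + M d c a b + M d c b a) / 24

/-- The quadrilinear form `Λ₄(M; f₁, f₂, f₃, f₄)` over the hyperplane `ξ₁+ξ₂+ξ₃+ξ₄=0`,
with the symmetrized symbol. -/
def Lambda4 (M : ℝ → ℝ → ℝ → ℝ → ℝ) (f₁ f₂ f₃ f₄ : ℝ → ℝ) : ℂ :=
  ∫ ξ₁ : ℝ, ∫ ξ₂ : ℝ, ∫ ξ₃ : ℝ,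
    ((sym4 M ξ₁ ξ₂ ξ₃ (-ξ₁ - ξ₂ - ξ₃) : ℝ) : ℂ) * fourierTr f₁ ξ₁ * fourierTr f₂ ξ₂ *
      fourierTr f₃ ξ₃ * fourierTr f₄ (-ξ₁ - ξ₂ - ξ₃)

/-- All space-time derivatives of `f` obey Schwartz-type bounds, locally uniformly in time. -/
def SchwartzLocUniform (f : ℝ → ℝ → ℝ) : Prop :=
  ∀ k n j : ℕ, ∀ T : ℝ, ∃ C : ℝ, ∀ x t : ℝ, |t| ≤ T →
    |x| ^ k * |iteratedDeriv n (fun y => iteratedDeriv j (fun τ => f y τ) t) x| ≤ C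

open Filter Topology

/-- partial derivative in the first variable -/
def pdx (G : ℝ × ℝ → ℝ) (p : ℝ × ℝ) : ℝ := fderiv ℝ G p (1, 0)
/-- partial derivative in the second variable -/
def pdt (G : ℝ × ℝ → ℝ) (p : ℝ × ℝ) : ℝ := fderiv ℝ G p (0, 1)

lemma hasDerivAt_pdx {G : ℝ × ℝ → ℝ} (hG : ContDiff ℝ (⊤ : ℕ∞) G) (x t : ℝ) :
    HasDerivAt (fun y => G (y, t)) (pdx G (x, t)) x := by
  have h1 : HasDerivAt (fun y : ℝ => (y, t)) ((1 : ℝ), (0 : ℝ)) x :=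
    (hasDerivAt_id x).prodMk (hasDerivAt_const x t)
  exact (hG.differentiable (by simp) (x, t)).hasFDerivAt.comp_hasDerivAt x h1

lemma hasDerivAt_pdt {G : ℝ × ℝ → ℝ} (hG : ContDiff ℝ (⊤ : ℕ∞) G) (x t : ℝ) :
    HasDerivAt (fun τ => G (x, τ)) (pdt G (x, t)) t := by
  have h1 : HasDerivAt (fun τ : ℝ => (x, τ)) ((0 : ℝ), (1 : ℝ)) t :=
    (hasDerivAt_const t x).prodMk (hasDerivAt_id t)
  exact (hG.differentiable (by simp) (x, t)).hasFDerivAt.comp_hasDerivAt t h1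

lemma contDiff_pdx {G : ℝ × ℝ → ℝ} (hG : ContDiff ℝ (⊤ : ℕ∞) G) :
    ContDiff ℝ (⊤ : ℕ∞) (pdx G) :=
  (hG.fderiv_right (le_refl _)).clm_apply contDiff_const

lemma contDiff_pdt {G : ℝ × ℝ → ℝ} (hG : ContDiff ℝ (⊤ : ℕ∞) G) :
    ContDiff ℝ (⊤ : ℕ∞) (pdt G) :=
  (hG.fderiv_right (le_refl _)).clm_apply contDiff_const

lemma le_top' : (2 : WithTop ℕ∞) ≤ ((⊤ : ℕ∞) : WithTop ℕ∞) := by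
  rw [show (2 : WithTop ℕ∞) = ((2:ℕ∞) : WithTop ℕ∞) from rfl, WithTop.coe_le_coe]
  exact le_top

lemma fderiv_apply_const {G : ℝ × ℝ → ℝ} (hG : ContDiff ℝ (⊤ : ℕ∞) G) (v w : ℝ × ℝ) (p : ℝ × ℝ) :
    fderiv ℝ (fun q => fderiv ℝ G q v) p w = fderiv ℝ (fderiv ℝ G) p w v := by
  have h1 : ContDiff ℝ ((⊤:ℕ∞) : WithTop ℕ∞) (fderiv ℝ G) := hG.fderiv_right (by norm_cast)
  have hdG : DifferentiableAt ℝ (fderiv ℝ G) p :=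
    (h1.differentiable (by simp)) p
  have : (fun q => fderiv ℝ G q v)
      = (ContinuousLinearMap.apply ℝ ℝ v) ∘ (fderiv ℝ G) := rfl
  rw [this, fderiv_comp p (ContinuousLinearMap.apply ℝ ℝ v).differentiableAt hdG,
    ContinuousLinearMap.fderiv]
  rfl

lemma pdt_pdx {G : ℝ × ℝ → ℝ} (hG : ContDiff ℝ (⊤ : ℕ∞) G) :
    pdt (pdx G) = pdx (pdt G) := by
  funext p
  have hsymm : IsSymmSndFDerivAt ℝ G p := hG.contDiffAt.isSymmSndFDerivAt (by rw [minSmoothness_of_isRCLikeNormedField]; exact le_top')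
  show fderiv ℝ (fun q => fderiv ℝ G q (1,0)) p (0,1)
      = fderiv ℝ (fun q => fderiv ℝ G q (0,1)) p (1,0)
  rw [fderiv_apply_const hG, fderiv_apply_const hG]
  exact hsymm (0,1) (1,0)

lemma contDiff_pdx_iter {G : ℝ × ℝ → ℝ} (hG : ContDiff ℝ (⊤ : ℕ∞) G) (n : ℕ) :
    ContDiff ℝ (⊤ : ℕ∞) (pdx^[n] G) := by
  induction n generalizing G with
  | zero => exact hG
  | succ n ih => rw [Function.iterate_succ_apply]; exact ih (contDiff_pdx hG)

lemma contDiff_pdt_iter {G : ℝ × ℝ → ℝ} (hG : ContDiff ℝ (⊤ : ℕ∞) G) (j : ℕ) :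
    ContDiff ℝ (⊤ : ℕ∞) (pdt^[j] G) := by
  induction j generalizing G with
  | zero => exact hG
  | succ j ih => rw [Function.iterate_succ_apply]; exact ih (contDiff_pdt hG)

lemma pdt_pdx_iter {G : ℝ × ℝ → ℝ} (hG : ContDiff ℝ (⊤ : ℕ∞) G) (n : ℕ) :
    pdt (pdx^[n] G) = pdx^[n] (pdt G) := by
  induction n generalizing G with
  | zero => rfl
  | succ n ih =>
      rw [Function.iterate_succ_apply, Function.iterate_succ_apply, ih (contDiff_pdx hG),
        ← pdt_pdx hG]

lemma deriv_fst {G : ℝ × ℝ → ℝ} (hG : ContDiff ℝ (⊤ : ℕ∞) G) (t : ℝ) :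
    deriv (fun y => G (y, t)) = fun y => pdx G (y, t) :=
  funext fun y => (hasDerivAt_pdx hG y t).deriv

lemma deriv_snd {G : ℝ × ℝ → ℝ} (hG : ContDiff ℝ (⊤ : ℕ∞) G) (x : ℝ) :
    deriv (fun τ => G (x, τ)) = fun τ => pdt G (x, τ) :=
  funext fun τ => (hasDerivAt_pdt hG x τ).deriv

lemma iteratedDeriv_fst {G : ℝ × ℝ → ℝ} (hG : ContDiff ℝ (⊤ : ℕ∞) G) (n : ℕ) (t : ℝ) :
    iteratedDeriv n (fun y => G (y, t)) = fun x => pdx^[n] G (x, t) := by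
  induction n generalizing G with
  | zero => simp [iteratedDeriv_zero]
  | succ n ih =>
      funext x
      rw [iteratedDeriv_succ', deriv_fst hG, ih (contDiff_pdx hG), Function.iterate_succ_apply]

lemma iteratedDeriv_snd {G : ℝ × ℝ → ℝ} (hG : ContDiff ℝ (⊤ : ℕ∞) G) (j : ℕ) (x : ℝ) :
    iteratedDeriv j (fun τ => G (x, τ)) = fun t => pdt^[j] G (x, t) := by
  induction j generalizing G with
  | zero => simp [iteratedDeriv_zero]
  | succ j ih =>
      funext t
      rw [iteratedDeriv_succ', deriv_snd hG, ih (contDiff_pdt hG), Function.iterate_succ_apply]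

lemma decay_bound (f : ℝ → ℝ → ℝ)
    (hf : ContDiff ℝ (⊤ : ℕ∞) (fun p : ℝ × ℝ => f p.1 p.2))
    (hB : SchwartzLocUniform f) (n j : ℕ) (T : ℝ) :
    ∃ C : ℝ, 0 ≤ C ∧ ∀ x t : ℝ, |t| ≤ T →
      |pdx^[n] (pdt^[j] (fun p : ℝ × ℝ => f p.1 p.2)) (x, t)| ≤ C / (1 + x ^ 2) := by
  set F : ℝ × ℝ → ℝ := fun p => f p.1 p.2 with hF
  obtain ⟨C₀, hC₀⟩ := hB 0 n j T
  obtain ⟨C₂, hC₂⟩ := hB 2 n j T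
  refine ⟨max (C₀ + C₂) 0, le_max_right _ _, fun x t ht => ?_⟩
  have key : ∀ k : ℕ, ∀ C : ℝ,
      (∀ x t : ℝ, |t| ≤ T →
        |x| ^ k * |iteratedDeriv n (fun y => iteratedDeriv j (fun τ => f y τ) t) x| ≤ C) →
      |x| ^ k * |pdx^[n] (pdt^[j] F) (x, t)| ≤ C := by
    intro k C hC
    have e1 : (fun y => iteratedDeriv j (fun τ => f y τ) t) = fun y => pdt^[j] F (y, t) := by
      funext y
      have : (fun τ => f y τ) = fun τ => F (y, τ) := rfl
      rw [this, iteratedDeriv_snd hf]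
    have e2 := hC x t ht
    rwa [e1, iteratedDeriv_fst (contDiff_pdt_iter hf j)] at e2
  have h0 := key 0 C₀ hC₀
  have h2 := key 2 C₂ hC₂
  simp only [pow_zero, one_mul] at h0
  rw [le_div_iff₀ (by positivity : (0:ℝ) < 1 + x ^ 2)]
  nlinarith [abs_nonneg (pdx^[n] (pdt^[j] F) (x, t)), sq_abs x, le_max_left (C₀ + C₂) (0:ℝ),
    sq_nonneg x]

lemma integrable_of_decay {g : ℝ → ℝ} (hc : Continuous g) {C : ℝ}
    (hg : ∀ x, |g x| ≤ C / (1 + x ^ 2)) : Integrable g := by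
  refine (integrable_inv_one_add_sq.const_mul C).mono' hc.aestronglyMeasurable ?_
  filter_upwards with x
  simpa [div_eq_mul_inv, Real.norm_eq_abs] using hg x

lemma tendsto_zero_of_decay {g : ℝ → ℝ} {C : ℝ}
    (hg : ∀ x, |g x| ≤ C / (1 + x ^ 2)) :
    Tendsto g atTop (𝓝 0) ∧ Tendsto g atBot (𝓝 0) := by
  have hC : Tendsto (fun u : ℝ => C / (1 + u ^ 2)) atTop (𝓝 0) := by
    apply Tendsto.div_atTop (tendsto_const_nhds)
    exact tendsto_atTop_add_const_left _ 1 (tendsto_pow_atTop two_ne_zero)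
  have habs : ∀ x : ℝ, C / (1 + x ^ 2) = (fun u : ℝ => C / (1 + u ^ 2)) (|x|) := by
    intro x; simp [sq_abs]
  constructor
  · refine squeeze_zero_norm (fun x => ?_) (hC.comp tendsto_abs_atTop_atTop)
    simpa [Function.comp, sq_abs] using hg x
  · refine squeeze_zero_norm (fun x => ?_) (hC.comp tendsto_abs_atBot_atTop)
    simpa [Function.comp, sq_abs] using hg x

lemma integral_deriv_eq_zero' {g g' : ℝ → ℝ} (hd : ∀ x, HasDerivAt g (g' x) x)
    (hi : Integrable g') (ht : Tendsto g atTop (𝓝 0)) (hb : Tendsto g atBot (𝓝 0)) :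
    ∫ x, g' x = 0 := by
  have h1 : ∫ x in Ioi (0:ℝ), g' x = 0 - g 0 :=
    integral_Ioi_of_hasDerivAt_of_tendsto' (fun x _ => hd x) hi.integrableOn ht
  have h2 : ∫ x in Iic (0:ℝ), g' x = g 0 - 0 :=
    integral_Iic_of_hasDerivAt_of_tendsto' (fun x _ => hd x) hi.integrableOn hb
  rw [← intervalIntegral.integral_Iic_add_Ioi hi.integrableOn hi.integrableOn, h1, h2]
  ring

lemma div_le_self' {C : ℝ} (x : ℝ) (hC : 0 ≤ C) : C / (1 + x ^ 2) ≤ C := by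
  apply div_le_self hC; nlinarith [sq_nonneg x]

lemma prod_decay {a b : ℝ → ℝ} {Ca Cb : ℝ} (ha : ∀ x, |a x| ≤ Ca)
    (hb : ∀ x, |b x| ≤ Cb / (1 + x ^ 2)) : ∀ x, |a x * b x| ≤ Ca * Cb / (1 + x ^ 2) := by
  intro x
  rw [abs_mul, mul_div_assoc]
  exact mul_le_mul (ha x) (hb x) (abs_nonneg _) (le_trans (abs_nonneg _) (ha x))

lemma cont_along {G : ℝ × ℝ → ℝ} (hG : ContDiff ℝ (⊤ : ℕ∞) G) (t : ℝ) :
    Continuous (fun x => G (x, t)) :=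
  hG.continuous.comp (continuous_id.prodMk continuous_const)

lemma cont_along' {G : ℝ × ℝ → ℝ} (hG : ContDiff ℝ (⊤ : ℕ∞) G) (x : ℝ) :
    Continuous (fun t => G (x, t)) :=
  hG.continuous.comp (continuous_const.prodMk continuous_id)

lemma mul_decay_pt {a b Ca Cb x : ℝ} (ha : |a| ≤ Ca) (hb : |b| ≤ Cb / (1 + x ^ 2)) :
    |a * b| ≤ Ca * Cb / (1 + x ^ 2) := by
  rw [abs_mul, mul_div_assoc]
  exact mul_le_mul ha hb (abs_nonneg _) ((abs_nonneg a).trans ha)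

lemma tri_abs (a b c : ℝ) : |a + b - c| ≤ |a| + |b| + |c| := by
  calc |a + b - c| ≤ |a + b| + |c| := by
        rw [sub_eq_add_neg]
        simpa using abs_add_le (a + b) (-c)
    _ ≤ |a| + |b| + |c| := add_le_add_left (abs_add_le a b) _

lemma hasDeriv_Lfun (f : ℝ → ℝ → ℝ)
    (hf : ContDiff ℝ (⊤ : ℕ∞) (fun p : ℝ × ℝ => f p.1 p.2))
    (hB : SchwartzLocUniform f) (t : ℝ) :
    HasDerivAt (fun τ => Lfun (fun x => f x τ))
      (2 * ∫ x : ℝ, pdt (fun p : ℝ × ℝ => f p.1 p.2) (x, t) *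
        (-(pdx (pdx (fun p : ℝ × ℝ => f p.1 p.2)) (x, t)) + f x t - (f x t) ^ 2)) t := by
  set F : ℝ × ℝ → ℝ := fun p => f p.1 p.2 with hFdef
  have hfx : ContDiff ℝ (⊤ : ℕ∞) (pdx F) := contDiff_pdx hf
  have hft : ContDiff ℝ (⊤ : ℕ∞) (pdt F) := contDiff_pdt hf
  have hfxx : ContDiff ℝ (⊤ : ℕ∞) (pdx (pdx F)) := contDiff_pdx hfx
  have hfxt : ContDiff ℝ (⊤ : ℕ∞) (pdx (pdt F)) := contDiff_pdx hft
  set T : ℝ := |t| + 1 with hT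
  have htT : |t| ≤ T := by rw [hT]; linarith
  obtain ⟨C00, hC00n, hC00⟩ := decay_bound f hf hB 0 0 T
  obtain ⟨C10, hC10n, hC10⟩ := decay_bound f hf hB 1 0 T
  obtain ⟨C01, hC01n, hC01⟩ := decay_bound f hf hB 0 1 T
  obtain ⟨C11, hC11n, hC11⟩ := decay_bound f hf hB 1 1 T
  obtain ⟨C20, hC20n, hC20⟩ := decay_bound f hf hB 2 0 T
  simp only [Function.iterate_zero_apply, Function.iterate_one, Function.iterate_succ_apply',
    Function.iterate_zero_apply] at hC00 hC10 hC01 hC11 hC20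
  have hC00s : ∀ x τ : ℝ, |τ| ≤ T → |F (x, τ)| ≤ C00 :=
    fun x τ h => (hC00 x τ h).trans (div_le_self' x hC00n)
  have hC10s : ∀ x τ : ℝ, |τ| ≤ T → |pdx F (x, τ)| ≤ C10 :=
    fun x τ h => (hC10 x τ h).trans (div_le_self' x hC10n)
  have hC01s : ∀ x τ : ℝ, |τ| ≤ T → |pdt F (x, τ)| ≤ C01 :=
    fun x τ h => (hC01 x τ h).trans (div_le_self' x hC01n)
  have hsq : ∀ x τ : ℝ, |τ| ≤ T → |(F (x, τ)) ^ 2| ≤ C00 * C00 := by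
    intro x τ h
    rw [pow_two, abs_mul]
    exact mul_le_mul (hC00s x τ h) (hC00s x τ h) (abs_nonneg _) hC00n
  set Φ : ℝ → ℝ → ℝ := fun τ x => (pdx F (x, τ)) ^ 2 + (F (x, τ)) ^ 2 - 2 / 3 * (F (x, τ)) ^ 3
    with hΦ
  set Φ' : ℝ → ℝ → ℝ := fun τ x =>
    2 * pdx F (x, τ) * pdx (pdt F) (x, τ) + 2 * F (x, τ) * pdt F (x, τ)
      - 2 * (F (x, τ)) ^ 2 * pdt F (x, τ) with hΦ'
  have hΦcont : ∀ τ, Continuous (Φ τ) := by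
    intro τ
    exact (((cont_along hfx τ).pow 2).add ((cont_along hf τ).pow 2)).sub
      (continuous_const.mul ((cont_along hf τ).pow 3))
  have hΦ'cont : ∀ τ, Continuous (Φ' τ) := by
    intro τ
    exact ((continuous_const.mul (cont_along hfx τ)).mul (cont_along hfxt τ)).add
      ((continuous_const.mul (cont_along hf τ)).mul (cont_along hft τ)) |>.sub
      ((continuous_const.mul ((cont_along hf τ).pow 2)).mul (cont_along hft τ))
  have hLeq : (fun τ => Lfun (fun x => f x τ)) = fun τ => ∫ x, Φ τ x := by
    funext τ
    unfold Lfun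
    congr 1
    funext x
    have e : deriv (fun x => f x τ) = fun x => pdx F (x, τ) := deriv_fst hf τ
    rw [e]
  -- bound for Φ' on the ball
  set K : ℝ := 2 * (C10 * C11) + 2 * (C00 * C01) + 2 * (C00 * C00 * C01) with hK
  have hbound : ∀ x : ℝ, ∀ τ ∈ Metric.ball t 1, |Φ' τ x| ≤ K / (1 + x ^ 2) := by
    intro x τ hτ
    have hτT : |τ| ≤ T := by
      have h1 : |τ - t| < 1 := by rwa [Metric.mem_ball, Real.dist_eq] at hτ
      calc |τ| = |t + (τ - t)| := by ring_nf
        _ ≤ |t| + |τ - t| := abs_add_le _ _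
        _ ≤ T := by rw [hT]; linarith
    have e1 : |2 * pdx F (x, τ) * pdx (pdt F) (x, τ)| ≤ 2 * (C10 * C11) / (1 + x ^ 2) := by
      rw [mul_assoc, abs_mul, abs_two, mul_div_assoc]
      exact mul_le_mul_of_nonneg_left (mul_decay_pt (hC10s x τ hτT) (hC11 x τ hτT)) two_pos.le
    have e2 : |2 * F (x, τ) * pdt F (x, τ)| ≤ 2 * (C00 * C01) / (1 + x ^ 2) := by
      rw [mul_assoc, abs_mul, abs_two, mul_div_assoc]
      exact mul_le_mul_of_nonneg_left (mul_decay_pt (hC00s x τ hτT) (hC01 x τ hτT)) two_pos.le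
    have e3 : |2 * (F (x, τ)) ^ 2 * pdt F (x, τ)| ≤ 2 * (C00 * C00 * C01) / (1 + x ^ 2) := by
      rw [mul_assoc, abs_mul, abs_two, mul_div_assoc]
      exact mul_le_mul_of_nonneg_left (mul_decay_pt (hsq x τ hτT) (hC01 x τ hτT)) two_pos.le
    calc |Φ' τ x| ≤ |2 * pdx F (x, τ) * pdx (pdt F) (x, τ)| + |2 * F (x, τ) * pdt F (x, τ)|
          + |2 * (F (x, τ)) ^ 2 * pdt F (x, τ)| := tri_abs _ _ _
      _ ≤ 2 * (C10 * C11) / (1 + x ^ 2) + 2 * (C00 * C01) / (1 + x ^ 2)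
          + 2 * (C00 * C00 * C01) / (1 + x ^ 2) := add_le_add (add_le_add e1 e2) e3
      _ = K / (1 + x ^ 2) := by rw [hK]; ring
  have hint : Integrable (Φ t) := by
    apply integrable_of_decay (hΦcont t)
      (C := C10 * C10 + C00 * C00 + 2 / 3 * (C00 * C00 * C00))
    intro x
    have e1 : |(pdx F (x, t)) ^ 2| ≤ C10 * C10 / (1 + x ^ 2) := by
      rw [pow_two]; exact mul_decay_pt (hC10s x t htT) (hC10 x t htT)
    have e2 : |(F (x, t)) ^ 2| ≤ C00 * C00 / (1 + x ^ 2) := by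
      rw [pow_two]; exact mul_decay_pt (hC00s x t htT) (hC00 x t htT)
    have e3 : |2 / 3 * (F (x, t)) ^ 3| ≤ 2 / 3 * (C00 * C00 * C00) / (1 + x ^ 2) := by
      rw [show (F (x, t)) ^ 3 = (F (x, t)) ^ 2 * F (x, t) from by ring, abs_mul,
        abs_of_nonneg (by norm_num : (0:ℝ) ≤ 2 / 3), mul_div_assoc]
      exact mul_le_mul_of_nonneg_left (mul_decay_pt (hsq x t htT) (hC00 x t htT))
        (by norm_num)
    calc |Φ t x| ≤ |(pdx F (x, t)) ^ 2| + |(F (x, t)) ^ 2| + |2 / 3 * (F (x, t)) ^ 3| :=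
          tri_abs _ _ _
      _ ≤ C10 * C10 / (1 + x ^ 2) + C00 * C00 / (1 + x ^ 2)
          + 2 / 3 * (C00 * C00 * C00) / (1 + x ^ 2) := add_le_add (add_le_add e1 e2) e3
      _ = (C10 * C10 + C00 * C00 + 2 / 3 * (C00 * C00 * C00)) / (1 + x ^ 2) := by ring
  have hdiff : ∀ x : ℝ, ∀ τ ∈ Metric.ball t 1, HasDerivAt (fun τ => Φ τ x) (Φ' τ x) τ := by
    intro x τ _
    have hu : HasDerivAt (fun τ => F (x, τ)) (pdt F (x, τ)) τ := hasDerivAt_pdt hf x τ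
    have hux : HasDerivAt (fun τ => pdx F (x, τ)) (pdx (pdt F) (x, τ)) τ := by
      have h := hasDerivAt_pdt hfx x τ
      rwa [pdt_pdx hf] at h
    have h := ((hux.pow 2).add (hu.pow 2)).sub ((hu.pow 3).const_mul (2 / 3))
    refine h.congr_deriv ?_
    push_cast
    ring
  have hbint : Integrable (fun x : ℝ => K / (1 + x ^ 2)) := by
    have := integrable_inv_one_add_sq.const_mul K
    simpa [div_eq_mul_inv] using this
  obtain ⟨hΦ'int, hkey⟩ := hasDerivAt_integral_of_dominated_loc_of_deriv_le
    (Metric.ball_mem_nhds t one_pos) (Eventually.of_forall fun τ => (hΦcont τ).aestronglyMeasurable) hint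
    ((hΦ'cont t).aestronglyMeasurable)
    (Eventually.of_forall fun x => hbound x) hbint
    (Eventually.of_forall fun x => hdiff x)
  -- integrability of pieces at time t
  have I1 : Integrable (fun x => pdx F (x, t) * pdx (pdt F) (x, t)) :=
    integrable_of_decay ((cont_along hfx t).mul (cont_along hfxt t))
      (fun x => mul_decay_pt (hC10s x t htT) (hC11 x t htT))
  have I2 : Integrable (fun x => F (x, t) * pdt F (x, t)) :=
    integrable_of_decay ((cont_along hf t).mul (cont_along hft t))
      (fun x => mul_decay_pt (hC00s x t htT) (hC01 x t htT))
  have I3 : Integrable (fun x => (F (x, t)) ^ 2 * pdt F (x, t)) :=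
    integrable_of_decay (((cont_along hf t).pow 2).mul (cont_along hft t))
      (fun x => mul_decay_pt (hsq x t htT) (hC01 x t htT))
  have I4 : Integrable (fun x => pdx (pdx F) (x, t) * pdt F (x, t)) :=
    integrable_of_decay ((cont_along hfxx t).mul (cont_along hft t))
      (fun x => mul_decay_pt ((hC20 x t htT).trans (div_le_self' x hC20n)) (hC01 x t htT))
  -- integration by parts
  have hIBP : ∫ x, pdx F (x, t) * pdx (pdt F) (x, t)
      = -∫ x, pdx (pdx F) (x, t) * pdt F (x, t) := by
    have hg : ∀ x, HasDerivAt (fun x => pdx F (x, t) * pdt F (x, t))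
        (pdx (pdx F) (x, t) * pdt F (x, t) + pdx F (x, t) * pdx (pdt F) (x, t)) x :=
      fun x => (hasDerivAt_pdx hfx x t).mul (hasDerivAt_pdx hft x t)
    have hgd : ∀ x : ℝ, |pdx F (x, t) * pdt F (x, t)| ≤ C10 * C01 / (1 + x ^ 2) :=
      fun x => mul_decay_pt (hC10s x t htT) (hC01 x t htT)
    obtain ⟨ht1, ht2⟩ := tendsto_zero_of_decay hgd
    have hzero : ∫ x, (pdx (pdx F) (x, t) * pdt F (x, t) + pdx F (x, t) * pdx (pdt F) (x, t))
        = 0 := integral_deriv_eq_zero' hg (I4.add I1) ht1 ht2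
    rw [integral_add I4 I1] at hzero
    linarith
  have hval : ∫ x, Φ' t x = 2 * ∫ x : ℝ, pdt F (x, t) *
      (-(pdx (pdx F) (x, t)) + F (x, t) - (F (x, t)) ^ 2) := by
    have el : (fun x => Φ' t x) = fun x => 2 * (pdx F (x, t) * pdx (pdt F) (x, t))
        + (2 * (F (x, t) * pdt F (x, t)) - 2 * ((F (x, t)) ^ 2 * pdt F (x, t))) := by
      funext x; simp only [hΦ']; ring
    have er : (fun x : ℝ => pdt F (x, t) * (-(pdx (pdx F) (x, t)) + F (x, t) - (F (x, t)) ^ 2))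
        = fun x => (-(pdx (pdx F) (x, t) * pdt F (x, t)) + F (x, t) * pdt F (x, t))
          - (F (x, t)) ^ 2 * pdt F (x, t) := by
      funext x; ring
    have h1 : ∫ x, Φ' t x = (∫ x, 2 * (pdx F (x, t) * pdx (pdt F) (x, t)))
        + ∫ x, (2 * (F (x, t) * pdt F (x, t)) - 2 * ((F (x, t)) ^ 2 * pdt F (x, t))) := by
      rw [el]; exact integral_add (I1.const_mul 2) ((I2.const_mul 2).sub (I3.const_mul 2))
    have h2 : ∫ x, (2 * (F (x, t) * pdt F (x, t)) - 2 * ((F (x, t)) ^ 2 * pdt F (x, t)))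
        = (∫ x, 2 * (F (x, t) * pdt F (x, t))) - ∫ x, 2 * ((F (x, t)) ^ 2 * pdt F (x, t)) :=
      integral_sub (I2.const_mul 2) (I3.const_mul 2)
    have h3 : ∫ x, 2 * (pdx F (x, t) * pdx (pdt F) (x, t))
        = 2 * ∫ x, pdx F (x, t) * pdx (pdt F) (x, t) := integral_const_mul _ _
    have h4 : ∫ x, 2 * (F (x, t) * pdt F (x, t)) = 2 * ∫ x, F (x, t) * pdt F (x, t) :=
      integral_const_mul _ _
    have h5 : ∫ x, 2 * ((F (x, t)) ^ 2 * pdt F (x, t))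
        = 2 * ∫ x, (F (x, t)) ^ 2 * pdt F (x, t) := integral_const_mul _ _
    have h6 : ∫ x, pdt F (x, t) * (-(pdx (pdx F) (x, t)) + F (x, t) - (F (x, t)) ^ 2)
        = (∫ x, (-(pdx (pdx F) (x, t) * pdt F (x, t)) + F (x, t) * pdt F (x, t)))
          - ∫ x, (F (x, t)) ^ 2 * pdt F (x, t) := by
      rw [er]; exact integral_sub (I4.neg.add I2) I3
    have h7 : ∫ x, (-(pdx (pdx F) (x, t) * pdt F (x, t)) + F (x, t) * pdt F (x, t))
        = (∫ x, -(pdx (pdx F) (x, t) * pdt F (x, t))) + ∫ x, F (x, t) * pdt F (x, t) :=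
      integral_add I4.neg I2
    have h8 : ∫ x, -(pdx (pdx F) (x, t) * pdt F (x, t))
        = -∫ x, pdx (pdx F) (x, t) * pdt F (x, t) := integral_neg _
    rw [h1, h2, h3, h4, h5, h6, h7, h8]
    rw [hIBP]
    ring
  rw [hLeq]
  rw [hval] at hkey
  exact hkey

lemma kdv_integral_zero (f : ℝ → ℝ → ℝ)
    (hf : ContDiff ℝ (⊤ : ℕ∞) (fun p : ℝ × ℝ => f p.1 p.2))
    (hB : SchwartzLocUniform f) (hK : IsKdVSolution f) (t : ℝ) :
    ∫ x : ℝ, pdt (fun p : ℝ × ℝ => f p.1 p.2) (x, t) *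
      (-(pdx (pdx (fun p : ℝ × ℝ => f p.1 p.2)) (x, t)) + f x t - (f x t) ^ 2) = 0 := by
  set F : ℝ × ℝ → ℝ := fun p => f p.1 p.2 with hFdef
  have hfx : ContDiff ℝ (⊤ : ℕ∞) (pdx F) := contDiff_pdx hf
  have hft : ContDiff ℝ (⊤ : ℕ∞) (pdt F) := contDiff_pdt hf
  have hfxx : ContDiff ℝ (⊤ : ℕ∞) (pdx (pdx F)) := contDiff_pdx hfx
  have hfxxx : ContDiff ℝ (⊤ : ℕ∞) (pdx (pdx (pdx F))) := contDiff_pdx hfxx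
  set T : ℝ := |t| with hT
  have htT : |t| ≤ T := le_refl _
  obtain ⟨C00, hC00n, hC00⟩ := decay_bound f hf hB 0 0 T
  obtain ⟨C10, hC10n, hC10⟩ := decay_bound f hf hB 1 0 T
  obtain ⟨C20, hC20n, hC20⟩ := decay_bound f hf hB 2 0 T
  obtain ⟨C01, hC01n, hC01⟩ := decay_bound f hf hB 0 1 T
  simp only [Function.iterate_zero_apply, Function.iterate_one, Function.iterate_succ_apply',
    Function.iterate_zero_apply] at hC00 hC10 hC20 hC01
  have hC00s : ∀ x : ℝ, |F (x, t)| ≤ C00 :=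
    fun x => (hC00 x t htT).trans (div_le_self' x hC00n)
  have hC20s : ∀ x : ℝ, |pdx (pdx F) (x, t)| ≤ C20 :=
    fun x => (hC20 x t htT).trans (div_le_self' x hC20n)
  have hC01s : ∀ x : ℝ, |pdt F (x, t)| ≤ C01 :=
    fun x => (hC01 x t htT).trans (div_le_self' x hC01n)
  have hsq : ∀ x : ℝ, |(F (x, t)) ^ 2| ≤ C00 * C00 := by
    intro x
    rw [pow_two, abs_mul]
    exact mul_le_mul (hC00s x) (hC00s x) (abs_nonneg _) hC00n
  -- pointwise KdV identity in terms of partials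
  have hKpt : ∀ x : ℝ, pdt F (x, t)
      = -(pdx (pdx (pdx F)) (x, t) + 2 * F (x, t) * pdx F (x, t)) := by
    intro x
    have h0 := hK.2.2 x t
    have e1 : deriv (fun τ => f x τ) t = pdt F (x, t) := (hasDerivAt_pdt hf x t).deriv
    have e2 : iteratedDeriv 3 (fun y => f y t) = fun x => pdx^[3] F (x, t) :=
      iteratedDeriv_fst hf 3 t
    simp only [Function.iterate_succ_apply', Function.iterate_zero_apply] at e2
    have e3 : deriv (fun y => (f y t) ^ 2) x = 2 * F (x, t) * pdx F (x, t) := by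
      have h := (hasDerivAt_pdx hf x t).pow 2
      have := h.deriv
      rw [show (fun y => (f y t) ^ 2) = (fun y => F (y, t)) ^ 2 from rfl, this]; push_cast; ring
    rw [e1, e2, e3] at h0
    linarith
  -- the antiderivative
  set G : ℝ → ℝ := fun x => (pdx (pdx F) (x, t) + (F (x, t)) ^ 2) ^ 2 / 2
    - F (x, t) * pdx (pdx F) (x, t) + (pdx F (x, t)) ^ 2 / 2 - 2 / 3 * (F (x, t)) ^ 3 with hG
  have hGd : ∀ x : ℝ, HasDerivAt G
      (pdt F (x, t) * (-(pdx (pdx F) (x, t)) + F (x, t) - (F (x, t)) ^ 2)) x := by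
    intro x
    have hu := hasDerivAt_pdx hf x t
    have hux := hasDerivAt_pdx hfx x t
    have huxx := hasDerivAt_pdx hfxx x t
    have h := ((((huxx.add (hu.pow 2)).pow 2).div_const 2).sub (hu.mul huxx)).add
      ((hux.pow 2).div_const 2) |>.sub ((hu.pow 3).const_mul (2 / 3))
    refine h.congr_deriv ?_
    rw [hKpt x]
    push_cast
    simp only [Pi.add_apply, Pi.pow_apply]
    ring
  -- decay / limits
  have htu := tendsto_zero_of_decay (fun x => hC00 x t htT)
  have htv := tendsto_zero_of_decay (fun x => hC10 x t htT)
  have htw := tendsto_zero_of_decay (fun x => hC20 x t htT)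
  have hGlim : ∀ l : Filter ℝ, Tendsto (fun x => F (x, t)) l (𝓝 0) →
      Tendsto (fun x => pdx F (x, t)) l (𝓝 0) →
      Tendsto (fun x => pdx (pdx F) (x, t)) l (𝓝 0) → Tendsto G l (𝓝 0) := by
    intro l hu hv hw
    have h := ((((hw.add (hu.pow 2)).pow 2).div_const 2).sub (hu.mul hw)).add
      ((hv.pow 2).div_const 2) |>.sub ((hu.pow 3).const_mul (2 / 3))
    convert h using 2
    norm_num
  -- integrability of the derivative
  have I2 : Integrable (fun x => F (x, t) * pdt F (x, t)) :=
    integrable_of_decay ((cont_along hf t).mul (cont_along hft t))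
      (fun x => mul_decay_pt (hC00s x) (hC01 x t htT))
  have I3 : Integrable (fun x => (F (x, t)) ^ 2 * pdt F (x, t)) :=
    integrable_of_decay (((cont_along hf t).pow 2).mul (cont_along hft t))
      (fun x => mul_decay_pt (hsq x) (hC01 x t htT))
  have I4 : Integrable (fun x => pdx (pdx F) (x, t) * pdt F (x, t)) :=
    integrable_of_decay ((cont_along hfxx t).mul (cont_along hft t))
      (fun x => mul_decay_pt (hC20s x) (hC01 x t htT))
  have hDint : Integrable (fun x => pdt F (x, t) *
      (-(pdx (pdx F) (x, t)) + F (x, t) - (F (x, t)) ^ 2)) :=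
    ((I4.neg.add I2).sub I3).congr (Eventually.of_forall fun x => by
      simp only [Pi.add_apply, Pi.sub_apply, Pi.neg_apply]; ring)
  exact integral_deriv_eq_zero' hGd hDint
    (hGlim atTop htu.1 htv.1 htw.1) (hGlim atBot htu.2 htv.2 htw.2)

lemma schwartz_decay {h : ℝ → ℝ} (hS : IsSchwartz h) (n : ℕ) :
    ∃ C : ℝ, 0 ≤ C ∧ ∀ x : ℝ, |iteratedDeriv n h x| ≤ C / (1 + x ^ 2) := by
  obtain ⟨C₀, hC₀⟩ := hS.2 0 n
  obtain ⟨C₂, hC₂⟩ := hS.2 2 n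
  refine ⟨max (C₀ + C₂) 0, le_max_right _ _, fun x => ?_⟩
  have h0 := hC₀ x
  have h2 := hC₂ x
  simp only [pow_zero, one_mul] at h0
  rw [le_div_iff₀ (by positivity : (0:ℝ) < 1 + x ^ 2)]
  nlinarith [abs_nonneg (iteratedDeriv n h x), sq_abs x, le_max_left (C₀ + C₂) (0:ℝ),
    sq_nonneg x]

lemma bdd_of_deriv_sq {u u' : ℝ → ℝ} (hu : ∀ x, HasDerivAt u (u' x) x)
    (hi : Integrable (fun x => u x * u' x)) : ∃ M : ℝ, 0 ≤ M ∧ ∀ x, |u x| ≤ M := by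
  have hs : ∀ x, HasDerivAt (fun y => (u y) ^ 2) (2 * (u x * u' x)) x := by
    intro x
    have h : HasDerivAt (fun y => (u y) ^ 2) (u' x * u x + u x * u' x) x := by
      refine ((hu x).pow 2).congr_deriv ?_; push_cast; ring
    convert h using 1; ring
  set I : ℝ := ∫ y, |u y * u' y| with hI
  have hInn : 0 ≤ I := integral_nonneg fun y => abs_nonneg _
  have h2i : Integrable (fun y => 2 * (u y * u' y)) := hi.const_mul 2
  have h2ai : Integrable (fun y => |2 * (u y * u' y)|) := h2i.abs
  have h2I : ∫ y, |2 * (u y * u' y)| = 2 * I := by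
    rw [hI, ← integral_const_mul]
    congr 1
    funext y
    rw [abs_mul, abs_two]
  have key : ∀ x, (u x) ^ 2 ≤ (u 0) ^ 2 + 2 * I := by
    intro x
    have heq : ∫ y in (0:ℝ)..x, 2 * (u y * u' y) = (u x) ^ 2 - (u 0) ^ 2 :=
      intervalIntegral.integral_eq_sub_of_hasDerivAt (fun y _ => hs y)
        h2i.intervalIntegrable
    have hle : |∫ y in (0:ℝ)..x, 2 * (u y * u' y)| ≤ 2 * I := by
      rcases le_total 0 x with hx | hx
      · calc |∫ y in (0:ℝ)..x, 2 * (u y * u' y)|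
            ≤ ∫ y in (0:ℝ)..x, |2 * (u y * u' y)| := by
              simpa only [Real.norm_eq_abs] using
                intervalIntegral.norm_integral_le_integral_norm
                  (f := fun y => 2 * (u y * u' y)) (μ := volume) hx
          _ = ∫ y in Ioc (0:ℝ) x, |2 * (u y * u' y)| := intervalIntegral.integral_of_le hx
          _ ≤ ∫ y, |2 * (u y * u' y)| := setIntegral_le_integral h2ai
              (Eventually.of_forall fun y => abs_nonneg _)
          _ = 2 * I := h2I
      · rw [intervalIntegral.integral_symm, abs_neg]
        calc |∫ y in x..(0:ℝ), 2 * (u y * u' y)|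
            ≤ ∫ y in x..(0:ℝ), |2 * (u y * u' y)| := by
              simpa only [Real.norm_eq_abs] using
                intervalIntegral.norm_integral_le_integral_norm
                  (f := fun y => 2 * (u y * u' y)) (μ := volume) hx
          _ = ∫ y in Ioc x (0:ℝ), |2 * (u y * u' y)| := intervalIntegral.integral_of_le hx
          _ ≤ ∫ y, |2 * (u y * u' y)| := setIntegral_le_integral h2ai
              (Eventually.of_forall fun y => abs_nonneg _)
          _ = 2 * I := h2I
    nlinarith [abs_le.mp hle]
  refine ⟨Real.sqrt ((u 0) ^ 2 + 2 * I), Real.sqrt_nonneg _, fun x => ?_⟩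
  rw [← Real.sqrt_sq_eq_abs]
  exact Real.sqrt_le_sqrt (key x)

lemma int_mul_of_sq {a b : ℝ → ℝ} (ha : Continuous a) (hb : Continuous b)
    (h1 : Integrable (fun x => (a x) ^ 2)) (h2 : Integrable (fun x => (b x) ^ 2)) :
    Integrable (fun x => a x * b x) := by
  refine ((h1.add h2).div_const 2).mono' ((ha.mul hb).aestronglyMeasurable) ?_
  filter_upwards with x
  rw [Real.norm_eq_abs, abs_mul]
  simp only [Pi.add_apply]
  nlinarith [sq_nonneg (|a x| - |b x|), sq_abs (a x), sq_abs (b x), abs_nonneg (a x),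
    abs_nonneg (b x)]

lemma critical_point (ψ : ℝ → ℝ) (hψ : ContDiff ℝ (⊤ : ℕ∞) ψ)
    (hode : ∀ x : ℝ, iteratedDeriv 2 ψ x - ψ x + (ψ x) ^ 2 = 0)
    (hL0 : Integrable (fun x : ℝ => (ψ x) ^ 2))
    (hL1 : Integrable (fun x : ℝ => (deriv ψ x) ^ 2))
    (hL2 : Integrable (fun x : ℝ => (iteratedDeriv 2 ψ x) ^ 2))
    (h : ℝ → ℝ) (hSh : IsSchwartz h) :
    HasDerivAt (fun a : ℝ => Lfun (fun x => ψ x + a * h x)) 0 0 := by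
  have hone : ((1 : ℕ∞) : WithTop ℕ∞) ≤ ((⊤ : ℕ∞) : WithTop ℕ∞) := by
    rw [WithTop.coe_le_coe]; exact le_top
  have hh : ContDiff ℝ (⊤ : ℕ∞) h := hSh.1
  have hψ' : ContDiff ℝ (⊤ : ℕ∞) (deriv ψ) := (contDiff_infty_iff_deriv.mp hψ).2
  have hψ'' : ContDiff ℝ (⊤ : ℕ∞) (deriv (deriv ψ)) := (contDiff_infty_iff_deriv.mp hψ').2
  have hh' : ContDiff ℝ (⊤ : ℕ∞) (deriv h) := (contDiff_infty_iff_deriv.mp hh).2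
  have e2 : iteratedDeriv 2 ψ = deriv (deriv ψ) := by
    rw [iteratedDeriv_succ, iteratedDeriv_one]
  have hψd : ∀ x, HasDerivAt ψ (deriv ψ x) x := fun x => ((hψ.differentiable (by simp)) x).hasDerivAt
  have hhd : ∀ x, HasDerivAt h (deriv h x) x := fun x => ((hh.differentiable (by simp)) x).hasDerivAt
  have hψ'd : ∀ x, HasDerivAt (deriv ψ) (iteratedDeriv 2 ψ x) x := by
    intro x
    rw [e2]
    exact ((hψ'.differentiable (by simp)) x).hasDerivAt
  have hwcont : Continuous (iteratedDeriv 2 ψ) := by rw [e2]; exact hψ''.continuous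
  have hpt : ∀ x, iteratedDeriv 2 ψ x = ψ x - (ψ x) ^ 2 := fun x => by linarith [hode x]
  -- boundedness of ψ and ψ'
  obtain ⟨Mψ, hMψn, hMψ⟩ := bdd_of_deriv_sq hψd
    (int_mul_of_sq hψ.continuous hψ'.continuous hL0 hL1)
  obtain ⟨Mψ', hMψ'n, hMψ'⟩ := bdd_of_deriv_sq hψ'd
    (int_mul_of_sq hψ'.continuous hwcont hL1 hL2)
  -- Schwartz bounds on h
  obtain ⟨Ch0, hCh0n, hCh0⟩ := schwartz_decay hSh 0
  obtain ⟨Ch1, hCh1n, hCh1⟩ := schwartz_decay hSh 1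
  simp only [iteratedDeriv_zero] at hCh0
  simp only [iteratedDeriv_one] at hCh1
  have hCh0s : ∀ x, |h x| ≤ Ch0 := fun x => (hCh0 x).trans (div_le_self' x hCh0n)
  have hCh1s : ∀ x, |deriv h x| ≤ Ch1 := fun x => (hCh1 x).trans (div_le_self' x hCh1n)
  -- integrand
  set Φ : ℝ → ℝ → ℝ := fun a x => (deriv ψ x + a * deriv h x) ^ 2 + (ψ x + a * h x) ^ 2
    - 2 / 3 * (ψ x + a * h x) ^ 3 with hΦ
  set Φ' : ℝ → ℝ → ℝ := fun a x => 2 * (deriv ψ x + a * deriv h x) * deriv h x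
    + 2 * (ψ x + a * h x) * h x - 2 * (ψ x + a * h x) ^ 2 * h x with hΦ'
  have hLeq : (fun a => Lfun (fun x => ψ x + a * h x)) = fun a => ∫ x, Φ a x := by
    funext a
    unfold Lfun
    congr 1
    funext x
    have e : deriv (fun x => ψ x + a * h x) x = deriv ψ x + a * deriv h x :=
      ((hψd x).add ((hhd x).const_mul a)).deriv
    rw [e]
  have hsupd : ∀ a x : ℝ, |a| ≤ 1 → |deriv ψ x + a * deriv h x| ≤ Mψ' + Ch1 := by
    intro a x ha
    calc |deriv ψ x + a * deriv h x| ≤ |deriv ψ x| + |a| * |deriv h x| := by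
          rw [← abs_mul]; exact abs_add_le _ _
      _ ≤ Mψ' + 1 * Ch1 := add_le_add (hMψ' x)
          (mul_le_mul ha (hCh1s x) (abs_nonneg _) one_pos.le)
      _ = Mψ' + Ch1 := by ring
  have hsup : ∀ a x : ℝ, |a| ≤ 1 → |ψ x + a * h x| ≤ Mψ + Ch0 := by
    intro a x ha
    calc |ψ x + a * h x| ≤ |ψ x| + |a| * |h x| := by
          rw [← abs_mul]; exact abs_add_le _ _
      _ ≤ Mψ + 1 * Ch0 := add_le_add (hMψ x)
          (mul_le_mul ha (hCh0s x) (abs_nonneg _) one_pos.le)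
      _ = Mψ + Ch0 := by ring
  have hsup2 : ∀ a x : ℝ, |a| ≤ 1 → |(ψ x + a * h x) ^ 2| ≤ (Mψ + Ch0) * (Mψ + Ch0) := by
    intro a x ha
    rw [pow_two, abs_mul]
    exact mul_le_mul (hsup a x ha) (hsup a x ha) (abs_nonneg _) (by positivity)
  set K : ℝ := 2 * ((Mψ' + Ch1) * Ch1) + 2 * ((Mψ + Ch0) * Ch0)
    + 2 * ((Mψ + Ch0) * (Mψ + Ch0) * Ch0) with hK
  have hbound : ∀ x : ℝ, ∀ a ∈ Metric.ball (0:ℝ) 1, |Φ' a x| ≤ K / (1 + x ^ 2) := by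
    intro x a ha
    have ha1 : |a| ≤ 1 := by
      rw [Metric.mem_ball, Real.dist_eq, sub_zero] at ha; exact ha.le
    have e1 : |2 * (deriv ψ x + a * deriv h x) * deriv h x|
        ≤ 2 * ((Mψ' + Ch1) * Ch1) / (1 + x ^ 2) := by
      rw [mul_assoc, abs_mul, abs_two, mul_div_assoc]
      exact mul_le_mul_of_nonneg_left (mul_decay_pt (hsupd a x ha1) (hCh1 x)) two_pos.le
    have e2 : |2 * (ψ x + a * h x) * h x| ≤ 2 * ((Mψ + Ch0) * Ch0) / (1 + x ^ 2) := by
      rw [mul_assoc, abs_mul, abs_two, mul_div_assoc]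
      exact mul_le_mul_of_nonneg_left (mul_decay_pt (hsup a x ha1) (hCh0 x)) two_pos.le
    have e3 : |2 * (ψ x + a * h x) ^ 2 * h x|
        ≤ 2 * ((Mψ + Ch0) * (Mψ + Ch0) * Ch0) / (1 + x ^ 2) := by
      rw [mul_assoc, abs_mul, abs_two, mul_div_assoc]
      exact mul_le_mul_of_nonneg_left (mul_decay_pt (hsup2 a x ha1) (hCh0 x)) two_pos.le
    calc |Φ' a x| ≤ |2 * (deriv ψ x + a * deriv h x) * deriv h x|
          + |2 * (ψ x + a * h x) * h x| + |2 * (ψ x + a * h x) ^ 2 * h x| := tri_abs _ _ _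
      _ ≤ 2 * ((Mψ' + Ch1) * Ch1) / (1 + x ^ 2) + 2 * ((Mψ + Ch0) * Ch0) / (1 + x ^ 2)
          + 2 * ((Mψ + Ch0) * (Mψ + Ch0) * Ch0) / (1 + x ^ 2) :=
        add_le_add (add_le_add e1 e2) e3
      _ = K / (1 + x ^ 2) := by rw [hK]; ring
  have hΦcont : ∀ a, Continuous (Φ a) := by
    intro a
    exact (((hψ'.continuous.add (continuous_const.mul hh'.continuous)).pow 2).add
      ((hψ.continuous.add (continuous_const.mul hh.continuous)).pow 2)).sub
      (continuous_const.mul ((hψ.continuous.add (continuous_const.mul hh.continuous)).pow 3))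
  have hΦ'cont : ∀ a, Continuous (Φ' a) := by
    intro a
    exact (((continuous_const.mul (hψ'.continuous.add (continuous_const.mul hh'.continuous))).mul
      hh'.continuous).add ((continuous_const.mul (hψ.continuous.add
      (continuous_const.mul hh.continuous))).mul hh.continuous)).sub
      ((continuous_const.mul ((hψ.continuous.add
      (continuous_const.mul hh.continuous)).pow 2)).mul hh.continuous)
  have I3ψ : Integrable (fun x => (ψ x) ^ 3) := by
    refine (hL0.const_mul Mψ).mono' ((hψ.continuous.pow 3).aestronglyMeasurable) ?_
    filter_upwards with x
    rw [Real.norm_eq_abs, show (ψ x) ^ 3 = ψ x * (ψ x) ^ 2 from by ring, abs_mul,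
      abs_of_nonneg (sq_nonneg (ψ x))]
    exact mul_le_mul_of_nonneg_right (hMψ x) (sq_nonneg _)
  have hint : Integrable (Φ 0) := by
    refine ((hL1.add hL0).sub (I3ψ.const_mul (2 / 3))).congr (Eventually.of_forall fun x => ?_)
    simp only [Pi.add_apply, Pi.sub_apply, hΦ]
    ring
  have hdiff : ∀ x : ℝ, ∀ a ∈ Metric.ball (0:ℝ) 1, HasDerivAt (fun a => Φ a x) (Φ' a x) a := by
    intro x a _
    have hA : HasDerivAt (fun a : ℝ => deriv ψ x + a * deriv h x) (deriv h x) a :=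
      (hasDerivAt_mul_const (deriv h x)).const_add (deriv ψ x)
    have hBB : HasDerivAt (fun a : ℝ => ψ x + a * h x) (h x) a :=
      (hasDerivAt_mul_const (h x)).const_add (ψ x)
    have hd := ((hA.pow 2).add (hBB.pow 2)).sub ((hBB.pow 3).const_mul (2 / 3))
    refine hd.congr_deriv ?_
    push_cast
    ring
  have hbint : Integrable (fun x : ℝ => K / (1 + x ^ 2)) := by
    have := integrable_inv_one_add_sq.const_mul K
    simpa [div_eq_mul_inv] using this
  obtain ⟨hΦ'int, hkey⟩ := hasDerivAt_integral_of_dominated_loc_of_deriv_le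
    (Metric.ball_mem_nhds 0 one_pos) (Eventually.of_forall fun a => (hΦcont a).aestronglyMeasurable) hint
    ((hΦ'cont 0).aestronglyMeasurable)
    (Eventually.of_forall fun x => hbound x) hbint
    (Eventually.of_forall fun x => hdiff x)
  have J1 : Integrable (fun x => deriv ψ x * deriv h x) :=
    integrable_of_decay (hψ'.continuous.mul hh'.continuous)
      (fun x => mul_decay_pt (hMψ' x) (hCh1 x))
  have J2 : Integrable (fun x => ψ x * h x) :=
    integrable_of_decay (hψ.continuous.mul hh.continuous)
      (fun x => mul_decay_pt (hMψ x) (hCh0 x))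
  have hψsq : ∀ x, |(ψ x) ^ 2| ≤ Mψ * Mψ := fun x => by
    rw [pow_two, abs_mul]; exact mul_le_mul (hMψ x) (hMψ x) (abs_nonneg _) hMψn
  have J3 : Integrable (fun x => (ψ x) ^ 2 * h x) :=
    integrable_of_decay ((hψ.continuous.pow 2).mul hh.continuous)
      (fun x => mul_decay_pt (hψsq x) (hCh0 x))
  have hw_bd : ∀ x, |iteratedDeriv 2 ψ x| ≤ Mψ + Mψ * Mψ := by
    intro x
    rw [hpt x]
    calc |ψ x - (ψ x) ^ 2| ≤ |ψ x| + |(ψ x) ^ 2| := by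
          rw [sub_eq_add_neg]
          exact (abs_add_le (ψ x) (-(ψ x) ^ 2)).trans_eq (by rw [abs_neg])
      _ ≤ Mψ + Mψ * Mψ := add_le_add (hMψ x)
          (by rw [pow_two, abs_mul]; exact mul_le_mul (hMψ x) (hMψ x) (abs_nonneg _) hMψn)
  have J4 : Integrable (fun x => iteratedDeriv 2 ψ x * h x) :=
    integrable_of_decay (hwcont.mul hh.continuous)
      (fun x => mul_decay_pt (hw_bd x) (hCh0 x))
  -- integration by parts
  have hIBP : ∫ x, deriv ψ x * deriv h x = -∫ x, iteratedDeriv 2 ψ x * h x := by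
    have hg : ∀ x, HasDerivAt (fun x => deriv ψ x * h x)
        (iteratedDeriv 2 ψ x * h x + deriv ψ x * deriv h x) x :=
      fun x => (hψ'd x).mul (hhd x)
    obtain ⟨ht1, ht2⟩ := tendsto_zero_of_decay (fun x => mul_decay_pt (hMψ' x) (hCh0 x))
    have hzero : ∫ x, (iteratedDeriv 2 ψ x * h x + deriv ψ x * deriv h x) = 0 :=
      integral_deriv_eq_zero' hg (J4.add J1) ht1 ht2
    rw [integral_add J4 J1] at hzero
    linarith
  have hval : ∫ x, Φ' 0 x = 0 := by
    have el : (fun x => Φ' 0 x) = fun x => 2 * (deriv ψ x * deriv h x)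
        + (2 * (ψ x * h x) - 2 * ((ψ x) ^ 2 * h x)) := by
      funext x; simp only [hΦ']; ring
    have h1 : ∫ x, Φ' 0 x = (∫ x, 2 * (deriv ψ x * deriv h x))
        + ∫ x, (2 * (ψ x * h x) - 2 * ((ψ x) ^ 2 * h x)) := by
      rw [el]; exact integral_add (J1.const_mul 2) ((J2.const_mul 2).sub (J3.const_mul 2))
    have h2 : ∫ x, (2 * (ψ x * h x) - 2 * ((ψ x) ^ 2 * h x))
        = (∫ x, 2 * (ψ x * h x)) - ∫ x, 2 * ((ψ x) ^ 2 * h x) :=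
      integral_sub (J2.const_mul 2) (J3.const_mul 2)
    have h3 : ∫ x, 2 * (deriv ψ x * deriv h x) = 2 * ∫ x, deriv ψ x * deriv h x :=
      integral_const_mul _ _
    have h4 : ∫ x, 2 * (ψ x * h x) = 2 * ∫ x, ψ x * h x := integral_const_mul _ _
    have h5 : ∫ x, 2 * ((ψ x) ^ 2 * h x) = 2 * ∫ x, (ψ x) ^ 2 * h x := integral_const_mul _ _
    have h6 : (∫ x, ψ x * h x) - ∫ x, (ψ x) ^ 2 * h x = ∫ x, iteratedDeriv 2 ψ x * h x := by
      rw [← integral_sub J2 J3]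
      congr 1
      funext x
      rw [hpt x]
      ring
    rw [h1, h2, h3, h4, h5, hIBP]
    linarith [h6]
  rw [hLeq]
  rw [hval] at hkey
  exact hkey

/-- differentiability of `t ↦ L(f(·,t))` with
`d/dt L(f(·,t)) = 2∫ f_t(−f_{xx} + f − f²)`; consequently `L` is conserved along KdV flow,
and solutions of `ψ'' − ψ + ψ² = 0` are critical points of `L`. -/
theorem lyapunov_time_derivative (f : ℝ → ℝ → ℝ)
    (hf : ContDiff ℝ (⊤ : ℕ∞) (fun p : ℝ × ℝ => f p.1 p.2))
    (hS : ∀ t : ℝ, IsSchwartz (fun x => f x t))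
    (hB : SchwartzLocUniform f) :
    (∀ t : ℝ, HasDerivAt (fun τ => Lfun (fun x => f x τ))
        (2 * ∫ x : ℝ, deriv (fun τ => f x τ) t *
          (-(iteratedDeriv 2 (fun y => f y t) x) + f x t - (f x t) ^ 2)) t) ∧
    (IsKdVSolution f → ∀ t : ℝ, Lfun (fun x => f x t) = Lfun (fun x => f x 0)) ∧
    (∀ ψ : ℝ → ℝ, ContDiff ℝ (⊤ : ℕ∞) ψ →
      (∀ x : ℝ, iteratedDeriv 2 ψ x - ψ x + (ψ x) ^ 2 = 0) →
      MeasureTheory.Integrable (fun x : ℝ => (ψ x) ^ 2) →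
      MeasureTheory.Integrable (fun x : ℝ => (deriv ψ x) ^ 2) →
      MeasureTheory.Integrable (fun x : ℝ => (iteratedDeriv 2 ψ x) ^ 2) →
      ∀ h : ℝ → ℝ, IsSchwartz h →
        HasDerivAt (fun a : ℝ => Lfun (fun x => ψ x + a * h x)) 0 0) := by
  have econv : ∀ t : ℝ, (fun x : ℝ => deriv (fun τ => f x τ) t *
      (-(iteratedDeriv 2 (fun y => f y t) x) + f x t - (f x t) ^ 2))
      = fun x => pdt (fun p : ℝ × ℝ => f p.1 p.2) (x, t) *
        (-(pdx (pdx (fun p : ℝ × ℝ => f p.1 p.2)) (x, t)) + f x t - (f x t) ^ 2) := by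
    intro t
    funext x
    have e1 : deriv (fun τ => f x τ) t = pdt (fun p : ℝ × ℝ => f p.1 p.2) (x, t) :=
      (hasDerivAt_pdt hf x t).deriv
    have e2 : iteratedDeriv 2 (fun y => f y t)
        = fun x => pdx^[2] (fun p : ℝ × ℝ => f p.1 p.2) (x, t) := iteratedDeriv_fst hf 2 t
    simp only [Function.iterate_succ_apply', Function.iterate_zero_apply] at e2
    rw [e1, e2]
  refine ⟨?_, ?_, ?_⟩
  · intro t
    have hd := hasDeriv_Lfun f hf hB t
    rw [show (∫ x : ℝ, deriv (fun τ => f x τ) t *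
        (-(iteratedDeriv 2 (fun y => f y t) x) + f x t - (f x t) ^ 2))
        = ∫ x : ℝ, pdt (fun p : ℝ × ℝ => f p.1 p.2) (x, t) *
          (-(pdx (pdx (fun p : ℝ × ℝ => f p.1 p.2)) (x, t)) + f x t - (f x t) ^ 2) from by
      rw [econv t]]
    exact hd
  · intro hK t
    have hzero : ∀ s : ℝ, HasDerivAt (fun τ => Lfun (fun x => f x τ)) 0 s := by
      intro s
      have hd := hasDeriv_Lfun f hf hB s
      rw [kdv_integral_zero f hf hB hK s, mul_zero] at hd
      exact hd
    exact is_const_of_deriv_eq_zero (fun s => (hzero s).differentiableAt)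
      (fun s => (hzero s).deriv) t 0
  · intro ψ hψ hode hL0 hL1 hL2 h hSh
    exact critical_point ψ hψ hode hL0 hL1 hL2 h hSh
end
end

section
/- Let 0 ≤ s < 1 and let m be a symbol as in the definition of I_N. There exists a constant C (depending only on s and the constants in the definition of m) such that for all N ≥ 1 and all ξ₁, ξ₂, ξ₃ ∈ ℝ with ξ₁ + ξ₂ + ξ₃ = 0, |ξ₃| ≤ N < |ξ₂|, and |ξ₂| ≥ 4|ξ₃| (so that |ξ₁| is comparable to |ξ₂|), one has |ξ₁|³ · m(ξ₁) · | m(ξ₂) − m(ξ₂ + ξ₃) | ≤ C · |ξ₁| |ξ₂| |ξ₃| · m(ξ₁) m(ξ₂) m(ξ₃). -/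
open MeasureTheory Real Set

noncomputable section

/-- mean value estimate (3.8): pointwise symbol bound in the regime
`|ξ₃| ≤ N < |ξ₂|`, `|ξ₂| ≥ 4|ξ₃|`. -/
theorem symbol_mean_value_bound (s : ℝ) (hs0 : 0 ≤ s) (hs1 : s < 1)
    (Cm : ℝ) (hCm : 0 < Cm) :
    ∃ C : ℝ, 0 < C ∧
      ∀ N : ℝ, 1 ≤ N → ∀ m : ℝ → ℝ, IsSymbol s N Cm m →
        ∀ ξ₁ ξ₂ ξ₃ : ℝ, ξ₁ + ξ₂ + ξ₃ = 0 → |ξ₃| ≤ N → N < |ξ₂| → 4 * |ξ₃| ≤ |ξ₂| →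
          |ξ₁| ^ 3 * m ξ₁ * |m ξ₂ - m (ξ₂ + ξ₃)| ≤
            C * (|ξ₁| * |ξ₂| * |ξ₃|) * (m ξ₁ * m ξ₂ * m ξ₃) := by
  refine ⟨250 / 9 * Cm, by positivity, ?_⟩
  intro N hN m hm ξ₁ ξ₂ ξ₃ hsum h3N hN2 h43
  obtain ⟨hsmooth, hpos, heven, hmono, hlow, hhigh, hderiv⟩ := hm
  have hN0 : (0 : ℝ) < N := lt_of_lt_of_le one_pos hN
  have hm3 : m ξ₃ = 1 := hlow ξ₃ h3N
  have hB : (0 : ℝ) < |ξ₂| := lt_trans hN0 hN2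
  have hM1 : 0 < m ξ₁ := (hpos ξ₁).1
  have hM2 : 0 < m ξ₂ := (hpos ξ₂).1
  rcases eq_or_ne ξ₃ 0 with h30 | h30
  · simp [h30]
  -- ξ₃ ≠ 0 : mean value theorem
  have hdiff : Differentiable ℝ m := hsmooth.differentiable (by simp)
  have h3ne : |ξ₃| ≠ 0 := abs_ne_zero.mpr h30
  have key : ∃ c : ℝ, |c - ξ₂| ≤ |ξ₃| ∧
      |m ξ₂ - m (ξ₂ + ξ₃)| = |deriv m c| * |ξ₃| := by
    rcases lt_or_gt_of_ne h30 with h3 | h3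
    · have hab : ξ₂ + ξ₃ < ξ₂ := by linarith
      obtain ⟨c, ⟨hcl, hcr⟩, hceq⟩ := exists_deriv_eq_slope m hab
        hdiff.continuous.continuousOn hdiff.differentiableOn
      refine ⟨c, ?_, ?_⟩
      · rw [abs_of_neg (by linarith : c - ξ₂ < 0), abs_of_neg h3]; linarith
      · have h0 : ξ₂ - (ξ₂ + ξ₃) = -ξ₃ := by ring
        rw [h0] at hceq
        rw [hceq, abs_div, abs_neg, div_mul_cancel₀ _ h3ne]
    · have hab : ξ₂ < ξ₂ + ξ₃ := by linarith
      obtain ⟨c, ⟨hcl, hcr⟩, hceq⟩ := exists_deriv_eq_slope m hab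
        hdiff.continuous.continuousOn hdiff.differentiableOn
      refine ⟨c, ?_, ?_⟩
      · rw [abs_of_pos (by linarith : (0:ℝ) < c - ξ₂), abs_of_pos h3]; linarith
      · have h0 : ξ₂ + ξ₃ - ξ₂ = ξ₃ := by ring
        rw [h0] at hceq
        rw [hceq, abs_div, div_mul_cancel₀ _ h3ne]
        exact abs_sub_comm _ _
  obtain ⟨c, hc1, hc2⟩ := key
  have hcabs : 3 / 4 * |ξ₂| ≤ |c| := by
    have h1 : |ξ₂| - |c| ≤ |ξ₂ - c| := abs_sub_abs_le_abs_sub ξ₂ c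
    rw [abs_sub_comm] at h1
    linarith
  have hcpos : (0 : ℝ) < |c| := by linarith
  -- bound on the derivative at c
  have hder : |deriv m c| ≤ 160 / 9 * Cm * m ξ₂ / |ξ₂| := by
    rcases lt_or_ge |c| N with hcN | hcN
    · -- m is locally constant near c
      have hmem : {x : ℝ | |x| < N} ∈ nhds c :=
        (isOpen_lt continuous_abs continuous_const).mem_nhds hcN
      have hev : m =ᶠ[nhds c] fun _ => (1 : ℝ) := by
        filter_upwards [hmem] with x hx using hlow x hx.le
      rw [hev.deriv_eq]
      simp only [deriv_const, abs_zero]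
      positivity
    · -- m c ≤ 40/3 * m ξ₂
      have hcomp : m c ≤ 40 / 3 * m ξ₂ := by
        rcases le_or_gt |ξ₂| |c| with h | h
        · have := hmono ξ₂ c h
          linarith
        · rcases le_or_gt (10 * N) |c| with h10 | h10
          · have hcval : m c = (|c| / N) ^ (s - 1) := hhigh c h10
            have h2val : m ξ₂ = (|ξ₂| / N) ^ (s - 1) := hhigh ξ₂ (le_trans h10 h.le)
            have hb1 : (3 / 4 : ℝ) * (|ξ₂| / N) ≤ |c| / N := by
              rw [show (3 / 4 : ℝ) * (|ξ₂| / N) = 3 / 4 * |ξ₂| / N by ring]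
              gcongr
            have hb2 : (0 : ℝ) < 3 / 4 * (|ξ₂| / N) := by positivity
            have hstep : (|c| / N) ^ (s - 1) ≤ (3 / 4 * (|ξ₂| / N)) ^ (s - 1) :=
              Real.rpow_le_rpow_of_nonpos hb2 hb1 (by linarith)
            have hmul : (3 / 4 * (|ξ₂| / N) : ℝ) ^ (s - 1) =
                (3 / 4 : ℝ) ^ (s - 1) * (|ξ₂| / N) ^ (s - 1) :=
              Real.mul_rpow (by norm_num) (by positivity)
            have hexp : (3 / 4 : ℝ) ^ (s - 1) ≤ (3 / 4 : ℝ) ^ (-1 : ℝ) :=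
              Real.rpow_le_rpow_of_exponent_ge (by norm_num) (by norm_num) (by linarith)
            have hinv : (3 / 4 : ℝ) ^ (-1 : ℝ) = 4 / 3 := by
              rw [Real.rpow_neg_one]; norm_num
            have hpow2 : (0 : ℝ) ≤ (|ξ₂| / N) ^ (s - 1) := by positivity
            calc m c = (|c| / N) ^ (s - 1) := hcval
              _ ≤ (3 / 4 : ℝ) ^ (s - 1) * (|ξ₂| / N) ^ (s - 1) := by
                  rw [← hmul]; exact hstep
              _ ≤ 4 / 3 * (|ξ₂| / N) ^ (s - 1) := by
                  apply mul_le_mul_of_nonneg_right _ hpow2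
                  rw [← hinv]; exact hexp
              _ ≤ 40 / 3 * m ξ₂ := by rw [h2val]; nlinarith
          · -- |c| < 10 N, so |ξ₂| ≤ 40/3 N and m ξ₂ ≥ 3/40
            have hξle : |ξ₂| ≤ 40 * N / 3 := by linarith
            have habs : |40 * N / 3| = 40 * N / 3 := abs_of_pos (by positivity)
            have hval : m (40 * N / 3) = (|40 * N / 3| / N) ^ (s - 1) :=
              hhigh _ (by rw [habs]; linarith)
            have hmo : m (40 * N / 3) ≤ m ξ₂ := hmono ξ₂ _ (by rw [habs]; linarith)
            have hsimp : (|40 * N / 3| / N : ℝ) = 40 / 3 := by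
              rw [habs]; field_simp
            have hlb : (3 / 40 : ℝ) ≤ (40 / 3 : ℝ) ^ (s - 1) := by
              have h1 : (40 / 3 : ℝ) ^ (-1 : ℝ) ≤ (40 / 3 : ℝ) ^ (s - 1) :=
                Real.rpow_le_rpow_of_exponent_le (by norm_num) (by linarith)
              rw [Real.rpow_neg_one] at h1
              calc (3 / 40 : ℝ) = (40 / 3 : ℝ)⁻¹ := by norm_num
                _ ≤ _ := h1
            have hm2lb : (3 / 40 : ℝ) ≤ m ξ₂ := by
              calc (3 / 40 : ℝ) ≤ (40 / 3 : ℝ) ^ (s - 1) := hlb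
                _ = m (40 * N / 3) := by rw [hval, hsimp]
                _ ≤ m ξ₂ := hmo
            have := (hpos c).2
            linarith
      have h1 : |deriv m c| ≤ Cm * m c / |c| := hderiv c hcN
      have h2 : Cm * m c / |c| ≤ 160 / 9 * Cm * m ξ₂ / |ξ₂| := by
        rw [div_le_div_iff₀ hcpos hB]
        have hmc : 0 < m c := (hpos c).1
        nlinarith [mul_le_mul_of_nonneg_left hcomp (le_of_lt hCm),
          mul_le_mul_of_nonneg_left hcabs (mul_pos hCm hmc).le]
      linarith
  -- comparability of |ξ₁| and |ξ₂|
  have hA : |ξ₁| ≤ 5 / 4 * |ξ₂| := by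
    have h1 : ξ₁ = -(ξ₂ + ξ₃) := by linarith
    rw [h1, abs_neg]
    calc |ξ₂ + ξ₃| ≤ |ξ₂| + |ξ₃| := abs_add_le _ _
      _ ≤ 5 / 4 * |ξ₂| := by linarith
  -- final assembly
  have hΔ : |m ξ₂ - m (ξ₂ + ξ₃)| ≤ 160 / 9 * Cm * m ξ₂ / |ξ₂| * |ξ₃| := by
    rw [hc2]
    exact mul_le_mul_of_nonneg_right hder (abs_nonneg _)
  have hA0 : (0 : ℝ) ≤ |ξ₁| := abs_nonneg _
  have hD0 : (0 : ℝ) ≤ |ξ₃| := abs_nonneg _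
  calc |ξ₁| ^ 3 * m ξ₁ * |m ξ₂ - m (ξ₂ + ξ₃)|
      ≤ |ξ₁| ^ 3 * m ξ₁ * (160 / 9 * Cm * m ξ₂ / |ξ₂| * |ξ₃|) :=
        mul_le_mul_of_nonneg_left hΔ (by positivity)
    _ = 160 / 9 * Cm * m ξ₁ * m ξ₂ * |ξ₃| * (|ξ₁| ^ 3 / |ξ₂|) := by ring
    _ ≤ 160 / 9 * Cm * m ξ₁ * m ξ₂ * |ξ₃| * (25 / 16 * |ξ₁| * |ξ₂|) := by
        apply mul_le_mul_of_nonneg_left _ (by positivity)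
        rw [div_le_iff₀ hB]
        nlinarith [mul_le_mul hA hA hA0 (by positivity : (0:ℝ) ≤ 5 / 4 * |ξ₂|)]
    _ = 250 / 9 * Cm * (|ξ₁| * |ξ₂| * |ξ₃|) * (m ξ₁ * m ξ₂ * m ξ₃) := by
        rw [hm3]; ring
end
end

section
/- Let u be a classical solution of the KdV equation. Then the three functionals G(u(·,t)) = ∫_ℝ u(x,t) dx, ∫_ℝ u(x,t)² dx, and H(u(·,t)) = ∫_ℝ ( u_x(x,t)² − (2/3) u(x,t)³ ) dx are each independent of t: for all t ∈ ℝ they equal their values at t = 0. -/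
open MeasureTheory Real Set

noncomputable section

open Filter Topology



/-- Decay predicate: all polynomial-weighted bounds. -/
def KdVDcy (f : ℝ → ℝ) : Prop := ∀ k : ℕ, ∃ C : ℝ, ∀ x : ℝ, |x| ^ k * |f x| ≤ C

namespace KdVDcy

lemma bound2 {f : ℝ → ℝ} (hf : KdVDcy f) : ∃ C : ℝ, ∀ x : ℝ, |f x| ≤ C / (1 + x ^ 2) := by
  obtain ⟨C0, h0⟩ := hf 0
  obtain ⟨C2, h2⟩ := hf 2
  refine ⟨C0 + C2, fun x => ?_⟩
  rw [le_div_iff₀ (by positivity)]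
  have h0' := h0 x
  have h2' := h2 x
  simp only [pow_zero, one_mul] at h0'
  have : |x| ^ 2 = x ^ 2 := sq_abs x
  nlinarith [abs_nonneg (f x)]

lemma integrable {f : ℝ → ℝ} (hf : KdVDcy f) (hc : Continuous f) : Integrable f := by
  obtain ⟨C, hC⟩ := hf.bound2
  refine (integrable_inv_one_add_sq.const_mul C).mono' hc.aestronglyMeasurable ?_
  refine Filter.Eventually.of_forall fun x => ?_
  simpa [Real.norm_eq_abs, div_eq_mul_inv] using hC x

lemma tendsto_atTop {f : ℝ → ℝ} (hf : KdVDcy f) : Tendsto f atTop (𝓝 0) := by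
  obtain ⟨C, hC⟩ := hf.bound2
  apply squeeze_zero_norm (a := fun x : ℝ => C / (1 + x ^ 2))
    (fun x => by simpa [Real.norm_eq_abs] using hC x)
  have h : Tendsto (fun x : ℝ => 1 + x ^ 2) atTop atTop :=
    tendsto_atTop_add_const_left _ _ (tendsto_pow_atTop two_ne_zero)
  exact Tendsto.div_atTop tendsto_const_nhds h

lemma tendsto_atBot {f : ℝ → ℝ} (hf : KdVDcy f) : Tendsto f atBot (𝓝 0) := by
  obtain ⟨C, hC⟩ := hf.bound2
  apply squeeze_zero_norm (a := fun x : ℝ => C / (1 + x ^ 2))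
    (fun x => by simpa [Real.norm_eq_abs] using hC x)
  have h : Tendsto (fun x : ℝ => 1 + x ^ 2) atBot atTop := by
    apply tendsto_atTop_add_const_left
    have h0 : Tendsto (fun x : ℝ => |x|) atBot atTop := tendsto_abs_atBot_atTop
    have h1 := (tendsto_pow_atTop (n := 2) two_ne_zero).comp h0
    exact h1.congr fun x => by simp [sq_abs]
  exact Tendsto.div_atTop tendsto_const_nhds h

lemma nonneg_bound {f : ℝ → ℝ} {k : ℕ} {C : ℝ} (h : ∀ x : ℝ, |x| ^ k * |f x| ≤ C) : 0 ≤ C :=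
  le_trans (by positivity) (h 0)

lemma mul {f g : ℝ → ℝ} (hf : KdVDcy f) (hg : KdVDcy g) : KdVDcy (fun x => f x * g x) := by
  intro k
  obtain ⟨C, hC⟩ := hf k
  obtain ⟨D, hD⟩ := hg 0
  refine ⟨C * D, fun x => ?_⟩
  have h1 : |x| ^ k * |f x * g x| = (|x| ^ k * |f x|) * |g x| := by
    rw [abs_mul]; ring
  rw [h1]
  have hD' : |g x| ≤ D := by simpa using hD x
  exact mul_le_mul (hC x) hD' (abs_nonneg _) (nonneg_bound hC)

lemma add {f g : ℝ → ℝ} (hf : KdVDcy f) (hg : KdVDcy g) : KdVDcy (fun x => f x + g x) := by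
  intro k
  obtain ⟨C, hC⟩ := hf k
  obtain ⟨D, hD⟩ := hg k
  refine ⟨C + D, fun x => ?_⟩
  calc |x| ^ k * |f x + g x| ≤ |x| ^ k * (|f x| + |g x|) := by
        exact mul_le_mul_of_nonneg_left (abs_add_le _ _) (by positivity)
    _ = |x| ^ k * |f x| + |x| ^ k * |g x| := by ring
    _ ≤ C + D := add_le_add (hC x) (hD x)

lemma const_mul {f : ℝ → ℝ} (hf : KdVDcy f) (c : ℝ) : KdVDcy (fun x => c * f x) := by
  intro k
  obtain ⟨C, hC⟩ := hf k
  refine ⟨|c| * C, fun x => ?_⟩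
  rw [abs_mul]
  calc |x| ^ k * (|c| * |f x|) = |c| * (|x| ^ k * |f x|) := by ring
    _ ≤ |c| * C := mul_le_mul_of_nonneg_left (hC x) (abs_nonneg c)

lemma neg {f : ℝ → ℝ} (hf : KdVDcy f) : KdVDcy (fun x => -f x) := by
  simpa using hf.const_mul (-1)

lemma sub {f g : ℝ → ℝ} (hf : KdVDcy f) (hg : KdVDcy g) : KdVDcy (fun x => f x - g x) := by
  simpa [sub_eq_add_neg] using hf.add hg.neg

end KdVDcy

/-- FTC on the whole line : integral of a derivative vanishing at ±∞ is zero. -/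
lemma KdV_integral_deriv_zero {g g' : ℝ → ℝ} (hd : ∀ x, HasDerivAt g (g' x) x)
    (hi : Integrable g') (htop : Tendsto g atTop (𝓝 0)) (hbot : Tendsto g atBot (𝓝 0)) :
    (∫ x : ℝ, g' x) = 0 := by
  have h1 := integral_Ioi_of_hasDerivAt_of_tendsto' (a := 0) (f := g) (f' := g')
    (fun x _ => hd x) hi.integrableOn htop
  have h2 := integral_Iic_of_hasDerivAt_of_tendsto' (a := 0) (f := g) (f' := g')
    (fun x _ => hd x) hi.integrableOn hbot
  have h3 := intervalIntegral.integral_Iic_add_Ioi (b := (0:ℝ)) (f := g') hi.integrableOn hi.integrableOn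
  rw [← h3, h1, h2]; ring

/-- If `t ↦ ∫ f x t` has pointwise time-derivative `g` dominated locally uniformly by an
integrable bound, and `∫ g(·,t) = 0` for all `t`, then `∫ f(·,t)` is constant. -/
lemma KdV_const_of (f g : ℝ → ℝ → ℝ)
    (hfc : ∀ t, Continuous fun x => f x t)
    (hfi : ∀ t, Integrable fun x => f x t)
    (hgc : ∀ t, Continuous fun x => g x t)
    (hder : ∀ x t : ℝ, HasDerivAt (fun τ => f x τ) (g x t) t)
    (hbound : ∀ T : ℝ, 0 ≤ T → ∃ C : ℝ, ∀ x t : ℝ, |t| ≤ T → |g x t| ≤ C / (1 + x ^ 2))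
    (hzero : ∀ t, (∫ x : ℝ, g x t) = 0) :
    ∀ t, (∫ x : ℝ, f x t) = ∫ x : ℝ, f x 0 := by
  have key : ∀ t₀ : ℝ, HasDerivAt (fun t => ∫ x : ℝ, f x t) 0 t₀ := by
    intro t₀
    obtain ⟨C, hC⟩ := hbound (|t₀| + 1) (by positivity)
    have main := hasDerivAt_integral_of_dominated_loc_of_deriv_le
      (F := fun t x => f x t) (F' := fun t x => g x t)
      (bound := fun x : ℝ => C / (1 + x ^ 2)) (μ := volume) (x₀ := t₀) (Metric.ball_mem_nhds t₀ one_pos)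
      (Filter.Eventually.of_forall fun t => (hfc t).aestronglyMeasurable)
      (hfi t₀) ((hgc t₀).aestronglyMeasurable)
      (Filter.Eventually.of_forall fun x t ht => by
        have h1 : |t| ≤ |t₀| + 1 := by
          have h2 : |t - t₀| < 1 := by
            simpa [Real.dist_eq] using Metric.mem_ball.mp ht
          calc |t| = |t - t₀ + t₀| := by ring_nf
            _ ≤ |t - t₀| + |t₀| := abs_add_le _ _
            _ ≤ |t₀| + 1 := by linarith
        simpa [Real.norm_eq_abs] using hC x t h1)
      (by
        simpa [div_eq_mul_inv] using integrable_inv_one_add_sq.const_mul C)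
      (Filter.Eventually.of_forall fun x t _ => hder x t)
    have h := main.2
    rwa [hzero t₀] at h
  intro t
  exact is_const_of_deriv_eq_zero (fun s => (key s).differentiableAt) (fun s => (key s).deriv) t 0

lemma KdVDcy.congr {f g : ℝ → ℝ} (hf : KdVDcy f) (h : ∀ x, f x = g x) : KdVDcy g :=
  fun k => (hf k).imp fun C hC x => by rw [← h x]; exact hC x


section KdVAux

lemma KdV_it {S : ℝ → ℝ} (hS : ContDiff ℝ (⊤:ℕ∞) S) (n : ℕ) (x : ℝ) :
    HasDerivAt (iteratedDeriv n S) (iteratedDeriv (n+1) S x) x := by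
  rw [iteratedDeriv_succ]
  refine ((hS.differentiable_iteratedDeriv n ?_).differentiableAt).hasDerivAt
  exact_mod_cast lt_top_iff_ne_top.mpr (by simp)

lemma KdV_itcont {S : ℝ → ℝ} (hS : ContDiff ℝ (⊤:ℕ∞) S) (n : ℕ) :
    Continuous (iteratedDeriv n S) := hS.continuous_iteratedDeriv n (by exact_mod_cast le_top)

lemma KdV_timeDiff {u : ℝ → ℝ → ℝ}
    (hsm : ContDiff ℝ (⊤ : ℕ∞) (fun p : ℝ × ℝ => u p.1 p.2)) (x t : ℝ) :
    HasDerivAt (fun τ => u x τ) (deriv (fun τ => u x τ) t) t := by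
  have hUd : Differentiable ℝ (fun p : ℝ × ℝ => u p.1 p.2) :=
    hsm.differentiable (by simp)
  have h : DifferentiableAt ℝ (fun τ => u x τ) t := by
    have h := (hUd (x, t)).comp t
      (((differentiable_const x).prodMk differentiable_id) t)
    simpa [Function.comp_def] using h
  exact h.hasDerivAt

end KdVAux

lemma KdV_clairaut {u : ℝ → ℝ → ℝ}
    (hsm : ContDiff ℝ (⊤ : ℕ∞) (fun p : ℝ × ℝ => u p.1 p.2)) (x t : ℝ) :
    HasDerivAt (fun τ => deriv (fun y => u y τ) x)
      (deriv (fun y => deriv (fun τ' => u y τ') t) x) t := by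
  set U : ℝ × ℝ → ℝ := fun p => u p.1 p.2 with hUdef
  have hUd : Differentiable ℝ U := hsm.differentiable (by simp)
  have hUf : ContDiff ℝ (⊤:ℕ∞) (fun p : ℝ × ℝ => fderiv ℝ U p) :=
    hsm.fderiv_right (by exact_mod_cast le_top)
  have hΦd : Differentiable ℝ (fun p : ℝ × ℝ => fderiv ℝ U p) :=
    hUf.differentiable (by simp)
  have P1 : ∀ y τ, HasDerivAt (fun z => u z τ) (fderiv ℝ U (y, τ) (1, 0)) y := by
    intro y τ
    have h := (hUd (y, τ)).hasFDerivAt.comp_hasDerivAt y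
      ((hasDerivAt_id y).prodMk (hasDerivAt_const y τ))
    simpa [Function.comp_def] using h
  have P2 : ∀ y τ, HasDerivAt (fun σ => u y σ) (fderiv ℝ U (y, τ) (0, 1)) τ := by
    intro y τ
    have h := (hUd (y, τ)).hasFDerivAt.comp_hasDerivAt τ
      ((hasDerivAt_const τ y).prodMk (hasDerivAt_id τ))
    simpa [Function.comp_def] using h
  have hfun1 : (fun τ' => deriv (fun y => u y τ') x) = fun τ' => fderiv ℝ U (x, τ') (1, 0) :=
    funext fun τ' => (P1 x τ').deriv
  have hfun2 : (fun y => deriv (fun τ' => u y τ') t) = fun y => fderiv ℝ U (y, t) (0, 1) :=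
    funext fun y => (P2 y t).deriv
  rw [hfun1, hfun2]
  have hc1 : HasDerivAt (fun τ' => fderiv ℝ U (x, τ'))
      (fderiv ℝ (fun p : ℝ × ℝ => fderiv ℝ U p) (x, t) (0, 1)) t := by
    have h := (hΦd (x, t)).hasFDerivAt.comp_hasDerivAt t
      ((hasDerivAt_const t x).prodMk (hasDerivAt_id t))
    simpa [Function.comp_def] using h
  have hc2 : HasDerivAt (fun y => fderiv ℝ U (y, t))
      (fderiv ℝ (fun p : ℝ × ℝ => fderiv ℝ U p) (x, t) (1, 0)) x := by
    have h := (hΦd (x, t)).hasFDerivAt.comp_hasDerivAt x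
      ((hasDerivAt_id x).prodMk (hasDerivAt_const x t))
    simpa [Function.comp_def] using h
  have h1 : HasDerivAt (fun τ' => fderiv ℝ U (x, τ') (1, 0))
      ((fderiv ℝ (fun p : ℝ × ℝ => fderiv ℝ U p) (x, t) (0, 1)) (1, 0)) t := by
    simpa using hc1.clm_apply (hasDerivAt_const t ((1 : ℝ), (0 : ℝ)))
  have h2 : HasDerivAt (fun y => fderiv ℝ U (y, t) (0, 1))
      ((fderiv ℝ (fun p : ℝ × ℝ => fderiv ℝ U p) (x, t) (1, 0)) (0, 1)) x := by
    simpa using hc2.clm_apply (hasDerivAt_const x ((0 : ℝ), (1 : ℝ)))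
  have hsymm := second_derivative_symmetric (f := U) (f' := fun p => fderiv ℝ U p)
    (f'' := fderiv ℝ (fun p : ℝ × ℝ => fderiv ℝ U p) (x, t))
    (fun y => (hUd y).hasFDerivAt) ((hΦd (x, t)).hasFDerivAt) (0, 1) (1, 0)
  rw [h2.deriv, ← hsymm]
  exact h1

lemma KdV_bnd {u : ℝ → ℝ → ℝ} (hb : SchwartzLocUniform u) (n j : ℕ) {T : ℝ} (hT : 0 ≤ T) :
    ∃ C : ℝ, ∀ x t : ℝ, |t| ≤ T →
      (1 + x ^ 2) * |iteratedDeriv n (fun y => iteratedDeriv j (fun τ => u y τ) t) x| ≤ C := by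
  obtain ⟨C0, h0⟩ := hb 0 n j T
  obtain ⟨C2, h2⟩ := hb 2 n j T
  refine ⟨C0 + C2, fun x t ht => ?_⟩
  have a0 := h0 x t ht
  have a2 := h2 x t ht
  have hx : |x| ^ 2 = x ^ 2 := sq_abs x
  simp only [pow_zero, one_mul] at a0
  nlinarith [abs_nonneg (iteratedDeriv n (fun y => iteratedDeriv j (fun τ => u y τ) t) x)]

/-- the three conserved quantities of KdV: the mean `∫u`, the `L²` mass
`∫u²`, and the Hamiltonian `H(u) = ∫ u_x² − (2/3)u³` are constant in time. -/
theorem kdv_conservation_laws (u : ℝ → ℝ → ℝ)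
    (hu : IsKdVSolution u) (hb : SchwartzLocUniform u) :
    (∀ t : ℝ, (∫ x : ℝ, u x t) = ∫ x : ℝ, u x 0) ∧
    (∀ t : ℝ, (∫ x : ℝ, (u x t) ^ 2) = ∫ x : ℝ, (u x 0) ^ 2) ∧
    (∀ t : ℝ, (∫ x : ℝ, (deriv (fun y => u y t) x) ^ 2 - (2 / 3) * (u x t) ^ 3) =
        ∫ x : ℝ, (deriv (fun y => u y 0) x) ^ 2 - (2 / 3) * (u x 0) ^ 3) := by
  obtain ⟨hsm, hSch, hpde⟩ := hu
  have hSc : ∀ t, ContDiff ℝ (⊤:ℕ∞) (fun x => u x t) := fun t => (hSch t).1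
  have hS0 : ∀ t x, HasDerivAt (fun z => u z t) (deriv (fun z => u z t) x) x := fun t x =>
    (((hSc t).differentiable (by simp)) x).hasDerivAt
  have hS1 : ∀ t x, HasDerivAt (deriv (fun z => u z t)) (iteratedDeriv 2 (fun z => u z t) x) x := by
    intro t x
    have h := KdV_it (hSc t) 1 x
    rwa [iteratedDeriv_one] at h
  have hS2 : ∀ t x, HasDerivAt (iteratedDeriv 2 (fun z => u z t))
      (iteratedDeriv 3 (fun z => u z t) x) x := fun t x => KdV_it (hSc t) 2 x
  have hS3 : ∀ t x, HasDerivAt (iteratedDeriv 3 (fun z => u z t))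
      (iteratedDeriv 4 (fun z => u z t) x) x := fun t x => KdV_it (hSc t) 3 x
  -- the PDE, rewritten
  have hveq : ∀ t y, deriv (fun τ => u y τ) t
      = -(iteratedDeriv 3 (fun z => u z t) y + 2 * u y t * deriv (fun z => u z t) y) := by
    intro t y
    have h1 := hpde y t
    have h2 : deriv (fun z => (u z t) ^ 2) y = 2 * u y t * deriv (fun z => u z t) y := by
      have h := ((hS0 t y).fun_pow 2).deriv
      simpa using h
    rw [h2] at h1
    linarith
  -- decay and continuity facts
  have dIt : ∀ t n, KdVDcy (iteratedDeriv n (fun x => u x t)) := fun t n k => (hSch t).2 k n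
  have dS : ∀ t, KdVDcy (fun x => u x t) := by
    intro t
    have h := dIt t 0
    rwa [iteratedDeriv_zero] at h
  have dS1 : ∀ t, KdVDcy (deriv (fun x => u x t)) := by
    intro t
    have h := dIt t 1
    rwa [iteratedDeriv_one] at h
  have cS : ∀ t, Continuous (fun x => u x t) := fun t => (hSc t).continuous
  have cS1 : ∀ t, Continuous (deriv (fun x => u x t)) := by
    intro t
    have h := KdV_itcont (hSc t) 1
    rwa [iteratedDeriv_one] at h
  -- time derivative of u as a spatial function
  have hEq1 : ∀ t, (fun x => deriv (fun τ => u x τ) t)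
      = fun x => -(iteratedDeriv 3 (fun z => u z t) x + 2 * u x t * deriv (fun z => u z t) x) :=
    fun t => funext fun y => hveq t y
  have hvg : ∀ t, KdVDcy (fun x => deriv (fun τ => u x τ) t) := by
    intro t
    rw [hEq1 t]
    exact ((dIt t 3).add (((dS t).const_mul 2).mul (dS1 t))).neg
  have hvc : ∀ t, Continuous (fun x => deriv (fun τ => u x τ) t) := by
    intro t
    rw [hEq1 t]
    exact ((KdV_itcont (hSc t) 3).add ((continuous_const.mul (cS t)).mul (cS1 t))).neg
  -- uniform-in-time bounds
  have bu : ∀ {T : ℝ}, 0 ≤ T → ∃ C : ℝ, ∀ x t : ℝ, |t| ≤ T →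
      (1 + x ^ 2) * |u x t| ≤ C := by
    intro T hT
    obtain ⟨C, hC⟩ := KdV_bnd hb 0 0 hT
    exact ⟨C, fun x t ht => by simpa [iteratedDeriv_zero] using hC x t ht⟩
  have bv : ∀ {T : ℝ}, 0 ≤ T → ∃ C : ℝ, ∀ x t : ℝ, |t| ≤ T →
      (1 + x ^ 2) * |deriv (fun τ => u x τ) t| ≤ C := by
    intro T hT
    obtain ⟨C, hC⟩ := KdV_bnd hb 0 1 hT
    exact ⟨C, fun x t ht => by
      simpa [iteratedDeriv_zero, iteratedDeriv_one] using hC x t ht⟩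
  have bw : ∀ {T : ℝ}, 0 ≤ T → ∃ C : ℝ, ∀ x t : ℝ, |t| ≤ T →
      (1 + x ^ 2) * |deriv (fun y => u y t) x| ≤ C := by
    intro T hT
    obtain ⟨C, hC⟩ := KdV_bnd hb 1 0 hT
    exact ⟨C, fun x t ht => by
      simpa [iteratedDeriv_zero, iteratedDeriv_one] using hC x t ht⟩
  have bvx : ∀ {T : ℝ}, 0 ≤ T → ∃ C : ℝ, ∀ x t : ℝ, |t| ≤ T →
      (1 + x ^ 2) * |deriv (fun y => deriv (fun τ => u y τ) t) x| ≤ C := by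
    intro T hT
    obtain ⟨C, hC⟩ := KdV_bnd hb 1 1 hT
    exact ⟨C, fun x t ht => by
      simpa [iteratedDeriv_one] using hC x t ht⟩
  refine ⟨?_, ?_, ?_⟩
  · -- conservation of ∫ u
    apply KdV_const_of u (fun x t => deriv (fun τ => u x τ) t) cS
      (fun t => (dS t).integrable (cS t)) hvc (fun x t => KdV_timeDiff hsm x t)
    · intro T hT
      obtain ⟨C, hC⟩ := bv hT
      refine ⟨C, fun x t ht => ?_⟩
      rw [le_div_iff₀ (by positivity)]
      nlinarith [hC x t ht]
    · intro t
      refine KdV_integral_deriv_zero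
        (g := fun y => -(iteratedDeriv 2 (fun z => u z t) y + u y t * u y t))
        (g' := fun x => deriv (fun τ => u x τ) t)
        (fun x => ?_) ((hvg t).integrable (hvc t)) ?_ ?_
      · have h := ((hS2 t x).fun_add ((hS0 t x).fun_mul (hS0 t x))).fun_neg
        refine h.congr_deriv ?_
        simp only [hveq]; ring
      · exact (((dIt t 2).add ((dS t).mul (dS t))).neg).tendsto_atTop
      · exact (((dIt t 2).add ((dS t).mul (dS t))).neg).tendsto_atBot
  · -- conservation of ∫ u²
    have hgEq : ∀ t, (fun x => 2 * u x t * deriv (fun τ => u x τ) t)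
        = fun x => 2 * u x t *
            -(iteratedDeriv 3 (fun z => u z t) x + 2 * u x t * deriv (fun z => u z t) x) :=
      fun t => funext fun x => by rw [hveq t x]
    have hgc : ∀ t, Continuous (fun x => 2 * u x t * deriv (fun τ => u x τ) t) :=
      fun t => (continuous_const.mul (cS t)).mul (hvc t)
    have hgd : ∀ t, KdVDcy (fun x => 2 * u x t * deriv (fun τ => u x τ) t) :=
      fun t => ((dS t).const_mul 2).mul (hvg t)
    apply KdV_const_of (fun x t => (u x t) ^ 2)
      (fun x t => 2 * u x t * deriv (fun τ => u x τ) t)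
      (fun t => (cS t).pow 2)
      (fun t => (((dS t).mul (dS t)).congr (fun x => by ring)).integrable ((cS t).pow 2))
      hgc
    · intro x t
      have h := (KdV_timeDiff hsm x t).fun_pow 2
      refine h.congr_deriv ?_
      beta_reduce
      push_cast
      ring
    · intro T hT
      obtain ⟨Cu, hCu⟩ := bu hT
      obtain ⟨Cv, hCv⟩ := bv hT
      refine ⟨2 * Cu * Cv, fun x t ht => ?_⟩
      have h1 := hCu x t ht
      have h2 := hCv x t ht
      have m1 : |u x t| ≤ Cu := by nlinarith [abs_nonneg (u x t), sq_nonneg x]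
      have key : |u x t| * ((1 + x ^ 2) * |deriv (fun τ => u x τ) t|) ≤ Cu * Cv :=
        mul_le_mul m1 h2 (by positivity) (le_trans (abs_nonneg _) m1)
      rw [le_div_iff₀ (by positivity)]
      have e : |2 * u x t * deriv (fun τ => u x τ) t|
          = 2 * |u x t| * |deriv (fun τ => u x τ) t| := by
        rw [abs_mul, abs_mul, abs_two]
      rw [e]
      nlinarith [key]
    · intro t
      refine KdV_integral_deriv_zero
        (g := fun y => -(2 * (u y t * iteratedDeriv 2 (fun z => u z t) y))
          + deriv (fun z => u z t) y * deriv (fun z => u z t) y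
          - 4 / 3 * (u y t * (u y t * u y t)))
        (g' := fun x => 2 * u x t * deriv (fun τ => u x τ) t)
        (fun x => ?_) ((hgd t).integrable (hgc t)) ?_ ?_
      · have h := (((((hS0 t x).fun_mul (hS2 t x)).const_mul 2).fun_neg.fun_add
          ((hS1 t x).fun_mul (hS1 t x))).fun_sub
          (((hS0 t x).fun_mul ((hS0 t x).fun_mul (hS0 t x))).const_mul (4 / 3)))
        refine h.congr_deriv ?_
        simp only [hveq]; ring
      · exact ((((((dS t).mul (dIt t 2)).const_mul 2).neg).add
          ((dS1 t).mul (dS1 t))).sub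
          (((dS t).mul ((dS t).mul (dS t))).const_mul (4 / 3))).tendsto_atTop
      · exact ((((((dS t).mul (dIt t 2)).const_mul 2).neg).add
          ((dS1 t).mul (dS1 t))).sub
          (((dS t).mul ((dS t).mul (dS t))).const_mul (4 / 3))).tendsto_atBot
  · -- conservation of the Hamiltonian
    have hvx : ∀ t x, deriv (fun y => deriv (fun τ => u y τ) t) x
        = -(iteratedDeriv 4 (fun z => u z t) x
            + (2 * deriv (fun z => u z t) x * deriv (fun z => u z t) x
              + 2 * u x t * iteratedDeriv 2 (fun z => u z t) x)) := by
      intro t x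
      rw [hEq1 t]
      exact (((hS3 t x).add (((hS0 t x).const_mul 2).mul (hS1 t x))).neg).deriv
    have hvxEq : ∀ t, (fun x => deriv (fun y => deriv (fun τ => u y τ) t) x)
        = fun x => -(iteratedDeriv 4 (fun z => u z t) x
            + (2 * deriv (fun z => u z t) x * deriv (fun z => u z t) x
              + 2 * u x t * iteratedDeriv 2 (fun z => u z t) x)) :=
      fun t => funext fun x => hvx t x
    have hvxc : ∀ t, Continuous (fun x => deriv (fun y => deriv (fun τ => u y τ) t) x) := by
      intro t
      rw [hvxEq t]
      exact ((KdV_itcont (hSc t) 4).add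
        (((continuous_const.mul (cS1 t)).mul (cS1 t)).add
          ((continuous_const.mul (cS t)).mul (KdV_itcont (hSc t) 2)))).neg
    have hvxd : ∀ t, KdVDcy (fun x => deriv (fun y => deriv (fun τ => u y τ) t) x) := by
      intro t
      rw [hvxEq t]
      exact ((dIt t 4).add
        ((((dS1 t).const_mul 2).mul (dS1 t)).add
          (((dS t).const_mul 2).mul (dIt t 2)))).neg
    have hgc : ∀ t, Continuous (fun x =>
        2 * deriv (fun y => u y t) x * deriv (fun y => deriv (fun τ => u y τ) t) x
          - 2 * (u x t) ^ 2 * deriv (fun τ => u x τ) t) := by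
      intro t
      exact (((continuous_const.mul (cS1 t)).mul (hvxc t)).sub
        ((continuous_const.mul ((cS t).pow 2)).mul (hvc t)))
    have hgd : ∀ t, KdVDcy (fun x =>
        2 * deriv (fun y => u y t) x * deriv (fun y => deriv (fun τ => u y τ) t) x
          - 2 * (u x t) ^ 2 * deriv (fun τ => u x τ) t) := by
      intro t
      refine KdVDcy.sub (((dS1 t).const_mul 2).mul (hvxd t)) ?_
      exact ((((dS t).mul (dS t)).congr (fun x => by ring)).const_mul 2).mul (hvg t)
    apply KdV_const_of
      (fun x t => (deriv (fun y => u y t) x) ^ 2 - (2 / 3) * (u x t) ^ 3)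
      (fun x t => 2 * deriv (fun y => u y t) x * deriv (fun y => deriv (fun τ => u y τ) t) x
          - 2 * (u x t) ^ 2 * deriv (fun τ => u x τ) t)
    · intro t
      exact ((cS1 t).pow 2).sub (continuous_const.mul ((cS t).pow 3))
    · intro t
      refine KdVDcy.integrable ?_ (((cS1 t).pow 2).sub (continuous_const.mul ((cS t).pow 3)))
      refine KdVDcy.congr (f := fun x => deriv (fun z => u z t) x * deriv (fun z => u z t) x
        - 2 / 3 * (u x t * (u x t * u x t))) ?_ (fun x => by ring)
      exact ((dS1 t).mul (dS1 t)).sub (((dS t).mul ((dS t).mul (dS t))).const_mul (2 / 3))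
    · exact hgc
    · intro x t
      have h1 := (KdV_clairaut hsm x t).fun_pow 2
      have h2 := ((KdV_timeDiff hsm x t).fun_pow 3).const_mul (2 / 3)
      have h := h1.fun_sub h2
      refine h.congr_deriv ?_
      beta_reduce
      push_cast
      ring
    · intro T hT
      obtain ⟨Cu, hCu⟩ := bu hT
      obtain ⟨Cv, hCv⟩ := bv hT
      obtain ⟨Cw, hCw⟩ := bw hT
      obtain ⟨Cx, hCx⟩ := bvx hT
      refine ⟨2 * Cw * Cx + 2 * (Cu * Cu) * Cv, fun x t ht => ?_⟩
      have h1 := hCu x t ht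
      have h2 := hCv x t ht
      have h3 := hCw x t ht
      have h4 := hCx x t ht
      have m1 : |u x t| ≤ Cu := by nlinarith [abs_nonneg (u x t), sq_nonneg x]
      have m3 : |deriv (fun y => u y t) x| ≤ Cw := by
        nlinarith [abs_nonneg (deriv (fun y => u y t) x), sq_nonneg x]
      have key1 : |deriv (fun y => u y t) x|
          * ((1 + x ^ 2) * |deriv (fun y => deriv (fun τ => u y τ) t) x|) ≤ Cw * Cx :=
        mul_le_mul m3 h4 (by positivity) (le_trans (abs_nonneg _) m3)
      have mu2 : |u x t| * |u x t| ≤ Cu * Cu :=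
        mul_le_mul m1 m1 (abs_nonneg _) (le_trans (abs_nonneg _) m1)
      have key2 : (|u x t| * |u x t|) * ((1 + x ^ 2) * |deriv (fun τ => u x τ) t|)
          ≤ (Cu * Cu) * Cv :=
        mul_le_mul mu2 h2 (by positivity)
          (mul_nonneg (le_trans (abs_nonneg _) m1) (le_trans (abs_nonneg _) m1))
      rw [le_div_iff₀ (by positivity)]
      have habs : |2 * deriv (fun y => u y t) x * deriv (fun y => deriv (fun τ => u y τ) t) x
          - 2 * (u x t) ^ 2 * deriv (fun τ => u x τ) t|
          ≤ 2 * |deriv (fun y => u y t) x| * |deriv (fun y => deriv (fun τ => u y τ) t) x|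
            + 2 * (|u x t| * |u x t|) * |deriv (fun τ => u x τ) t| := by
        calc _ ≤ |2 * deriv (fun y => u y t) x * deriv (fun y => deriv (fun τ => u y τ) t) x|
              + |2 * (u x t) ^ 2 * deriv (fun τ => u x τ) t| := abs_sub _ _
          _ = _ := by
              rw [abs_mul, abs_mul, abs_mul, abs_mul, abs_two, abs_pow]
              ring
      nlinarith [key1, key2, habs, abs_nonneg (2 * deriv (fun y => u y t) x
        * deriv (fun y => deriv (fun τ => u y τ) t) x
        - 2 * (u x t) ^ 2 * deriv (fun τ => u x τ) t)]
    · intro t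
      have hgd' := hgd t
      have hgc' := hgc t
      refine KdV_integral_deriv_zero
        (g := fun y => -(2 * deriv (fun z => u z t) y * iteratedDeriv 3 (fun z => u z t) y)
          - 4 * (u y t * (deriv (fun z => u z t) y * deriv (fun z => u z t) y))
          + (iteratedDeriv 2 (fun z => u z t) y + u y t * u y t)
            * (iteratedDeriv 2 (fun z => u z t) y + u y t * u y t))
        (g' := fun x =>
          2 * deriv (fun y => u y t) x * deriv (fun y => deriv (fun τ => u y τ) t) x
            - 2 * (u x t) ^ 2 * deriv (fun τ => u x τ) t)
        (fun x => ?_) (hgd'.integrable hgc') ?_ ?_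
      · have hA := ((((hS1 t x).const_mul 2).fun_mul (hS3 t x)).fun_neg)
        have hB := (((hS0 t x).fun_mul ((hS1 t x).fun_mul (hS1 t x))).const_mul 4)
        have hCC := ((hS2 t x).fun_add ((hS0 t x).fun_mul (hS0 t x)))
        have h := (hA.fun_sub hB).fun_add (hCC.fun_mul hCC)
        refine h.congr_deriv ?_
        simp only [hvx]
        simp only [hveq]
        ring
      · refine KdVDcy.tendsto_atTop ?_
        exact ((((dS1 t).const_mul 2).mul (dIt t 3)).neg.sub
          (((dS t).mul ((dS1 t).mul (dS1 t))).const_mul 4)).add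
          (((dIt t 2).add ((dS t).mul (dS t))).mul ((dIt t 2).add ((dS t).mul (dS t))))
      · refine KdVDcy.tendsto_atBot ?_
        exact ((((dS1 t).const_mul 2).mul (dIt t 3)).neg.sub
          (((dS t).mul ((dS1 t).mul (dS1 t))).const_mul 4)).add
          (((dIt t 2).add ((dS t).mul (dS t))).mul ((dIt t 2).add ((dS t).mul (dS t))))
end
end
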